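/- Fix an integer k ≥ 1 and an allowable pair (p/q, ν) where p, q are positive integers with gcd(p,q) = 1 and 0 < p/q < 1. Then B_k(p/q, ν) is a finite union of periodic orbits of the left shift on Σ⁺_{2k}, each of minimal period qk/gcd(p,k); every s ∈ B_k(p/q, ν) satisfies ρ̂(π̂_k(s)) = p/q; and λ_k(p/q, ν) is a convex combination of the unique shift-invariant probability measures supported on these periodic orbits. -/

import Mathlib

open Set Filter Topology MeasureTheory Function
open scoped ENNReal Classical

noncomputable section

/-- The circle ℝ/ℤ. -/
abbrev Circle1 : Type := AddCircle (1 : ℝ)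

/-- The k-fold cover ℝ/kℤ. -/
abbrev CircleK (k : ℕ) : Type := AddCircle ((k : ℝ))

/-- Projection ℝ → ℝ/ℤ. -/
def mk1 : ℝ → Circle1 := fun x => (x : Circle1)

/-- Projection ℝ → ℝ/kℤ. -/
def mkk (k : ℕ) : ℝ → CircleK k := fun x => (x : CircleK k)

/-- Covering projection S_k → S¹ induced by the identity on ℝ. -/
def piK (k : ℕ) : CircleK k → Circle1 :=
  QuotientAddGroup.map (AddSubgroup.zmultiples ((k : ℕ) : ℝ)) (AddSubgroup.zmultiples (1 : ℝ))
    (AddMonoidHom.id ℝ)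
    (by
      intro x hx
      obtain ⟨n, rfl⟩ := AddSubgroup.mem_zmultiples_iff.mp hx
      simp only [AddSubgroup.mem_comap, AddMonoidHom.id_apply]
      exact AddSubgroup.mem_zmultiples_iff.mpr
        ⟨n * (k : ℤ), by push_cast [zsmul_eq_mul]; ring⟩)

/-- Deck transformation of S_k, induced by x ↦ x + 1. -/
def TK (k : ℕ) : CircleK k → CircleK k := fun x => x + mkk k 1

/-- Forward orbit of a point. -/
def fwdOrbit {X : Type*} (f : X → X) (x : X) : Set X := Set.range fun n : ℕ => f^[n] x

/-- A nonempty compact invariant set on which every forward orbit is dense. -/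
def IsMinimalSet {X : Type*} [TopologicalSpace X] (f : X → X) (Z : Set X) : Prop :=
  Z.Nonempty ∧ IsCompact Z ∧ Set.MapsTo f Z Z ∧ ∀ z ∈ Z, Z ⊆ closure (fwdOrbit f z)

/-- x = lim f^[n i] x along some sequence n i → ∞. -/
def IsRecurrentPt {X : Type*} [TopologicalSpace X] (f : X → X) (x : X) : Prop :=
  ∃ n : ℕ → ℕ, Tendsto n atTop atTop ∧ Tendsto (fun i => f^[n i] x) atTop (𝓝 x)

/-- The point x has rotation number ρ for the lift gt. -/
def HasPtRotNum (gt : ℝ → ℝ) (x ρ : ℝ) : Prop :=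
  Tendsto (fun n : ℕ => (gt^[n] x - x) / n) atTop (𝓝 ρ)

/-- gt has rotation number ρ (the limit exists for all points and equals ρ). -/
def HasRotNum (gt : ℝ → ℝ) (ρ : ℝ) : Prop := ∀ x, HasPtRotNum gt x ρ

/-- The rotation set of a lift. -/
def rotSet (gt : ℝ → ℝ) : Set ℝ := {ρ | ∃ x, HasPtRotNum gt x ρ}

/-- Continuous nondecreasing degree-one lift. -/
def IsSemiMonotoneLift (ht : ℝ → ℝ) : Prop :=
  Continuous ht ∧ Monotone ht ∧ ∀ x, ht (x + 1) = ht x + 1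

/-- [a,b] is (a fundamental-domain representative of) a maximal nontrivial closed
arc on which the induced circle map is constant. -/
def IsFlatSpot (ht : ℝ → ℝ) (a b : ℝ) : Prop :=
  a < b ∧ b - a < 1 ∧ (∀ x ∈ Set.Icc a b, ht x = ht a) ∧
    ∀ a' b', a' ≤ a → b ≤ b' → (∀ x ∈ Set.Icc a' b', ht x = ht a) → a' = a ∧ b' = b

/-- The left shift on one-sided sequences. -/
def shiftSeq {α : Type*} : (ℕ → α) → ℕ → α := fun s n => s (n + 1)

/-- Strict lexicographic order on one-sided sequences. -/
def lexLt {α : Type*} [LT α] (s t : ℕ → α) : Prop :=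
  ∃ n, (∀ i, i < n → s i = t i) ∧ s n < t n

/-- Lexicographic order on one-sided sequences. -/
def lexLe {α : Type*} [LT α] (s t : ℕ → α) : Prop := s = t ∨ lexLt s t

/-- Reduction of every entry mod 2. -/
def pihat : (ℕ → ℕ) → ℕ → ℕ := fun s n => s n % 2

/-- The sequence s has symbolic rotation number ω: the averages of the mod-2
reductions of its entries converge to ω. -/
def symbRot (s : ℕ → ℕ) (ω : ℝ) : Prop :=
  Tendsto (fun n : ℕ => (∑ i ∈ Finset.range (n + 1), ((s i % 2 : ℕ) : ℝ)) / (n + 1))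
    atTop (𝓝 ω)

/-- Allowed transitions for Ω_k (entries mod 2k). -/
def transK (k : ℕ) (a c : ℕ) : Prop :=
  (Even a ∧ (c = a ∨ c = a + 1)) ∨ (Odd a ∧ (c = (a + 1) % (2 * k) ∨ c = (a + 2) % (2 * k)))

/-- The subshift Ω_k ⊆ Σ⁺_{2k}. -/
def OmegaK (k : ℕ) : Set (ℕ → ℕ) :=
  {s | (∀ n, s n < 2 * k) ∧ ∀ n, transK k (s n) (s (n + 1))}

/-- Allowed transitions for Ω_∞. -/
def transZ (a c : ℤ) : Prop :=
  (Even a ∧ (c = a ∨ c = a + 1)) ∨ (Odd a ∧ (c = a + 1 ∨ c = a + 2))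

/-- The subshift Ω_∞ ⊆ ℤ^ℕ. -/
def OmegaInf : Set (ℕ → ℤ) := {s | ∀ n, transZ (s n) (s (n + 1))}

/-- p̂_k : Ω_∞ → Ω_k, reduction of all entries mod 2k. -/
def projK (k : ℕ) : (ℕ → ℤ) → ℕ → ℕ := fun s n => (s n % (2 * k : ℤ)).toNat

/-- A symbolic k-fold semi-monotone subset of Ω_k. -/
def SymbolicKfsm (k : ℕ) (Z : Set (ℕ → ℕ)) : Prop :=
  Z ⊆ OmegaK k ∧ Set.MapsTo shiftSeq Z Z ∧
    ∃ Z' : Set (ℕ → ℤ), Z' ⊆ OmegaInf ∧ Set.MapsTo shiftSeq Z' Z' ∧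
      (fun s : ℕ → ℤ => fun n => s n + 2 * k) '' Z' = Z' ∧
      (∀ s ∈ Z', ∀ t ∈ Z', lexLe s t → lexLe (shiftSeq s) (shiftSeq t)) ∧
      projK k '' Z' = Z

/-- The dynamical order interval ⟨a, b⟩. -/
def dynInterval (a b : ℕ → ℕ) : Set (ℕ → ℕ) :=
  {s | ∀ n, lexLe a (shiftSeq^[n] s) ∧ lexLe (shiftSeq^[n] s) b}

/-- The unique shift-invariant probability measure on the orbit of a periodic
point of period N: the uniform average of point masses along the orbit. -/
noncomputable def orbitMeasure (s : ℕ → ℕ) (N : ℕ) : Measure (ℕ → ℕ) :=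
  (N : ℝ≥0∞)⁻¹ • ∑ i ∈ Finset.range N, Measure.dirac (shiftSeq^[i] s)

/-! ### The Hedlund–Morse construction -/

/-- Partial sums ν₁ + ⋯ + ν_j. -/
def psum {k : ℕ} (ν : Fin k → ℝ) (j : ℕ) : ℝ := ∑ i : Fin k, if (i : ℕ) < j then ν i else 0

/-- An allowable HM parameter pair. -/
def HMAllowable {k : ℕ} (ω : ℝ) (ν : Fin k → ℝ) : Prop :=
  0 < ω ∧ ω < 1 ∧ (∀ i, 0 ≤ ν i) ∧ ∑ i, ν i = k * (1 - ω)

/-- Left endpoint of the HM address interval X_m. -/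
def hmL {k : ℕ} (ω : ℝ) (ν : Fin k → ℝ) (m : ℕ) : ℝ :=
  if Even m then psum ν (m / 2) + ((m / 2 : ℕ) : ℝ) * ω
  else psum ν (m / 2 + 1) + ((m / 2 : ℕ) : ℝ) * ω

/-- Right endpoint of the HM address interval X_m. -/
def hmR {k : ℕ} (ω : ℝ) (ν : Fin k → ℝ) (m : ℕ) : ℝ :=
  if Even m then psum ν (m / 2 + 1) + ((m / 2 : ℕ) : ℝ) * ω
  else psum ν (m / 2 + 1) + ((m / 2 + 1 : ℕ) : ℝ) * ω

/-- The HM address interval X_m ⊆ ℝ (a fundamental-domain representative). -/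
def hmX {k : ℕ} (ω : ℝ) (ν : Fin k → ℝ) (m : ℕ) : Set ℝ := Set.Icc (hmL ω ν m) (hmR ω ν m)

/-- Rigid rotation by ω on S_k. -/
def RotK (k : ℕ) (ω : ℝ) : CircleK k → CircleK k := fun x => x + mkk k ω

/-- The good set: points whose forward rotation orbit avoids all endpoints of the
address intervals. -/
def hmGood (k : ℕ) (ω : ℝ) (ν : Fin k → ℝ) : Set (CircleK k) :=
  {x | ∀ n : ℕ, ∀ m, m < 2 * k →
    (RotK k ω)^[n] x ≠ mkk k (hmL ω ν m) ∧ (RotK k ω)^[n] x ≠ mkk k (hmR ω ν m)}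

/-- The address of a point of S_k (the index m with x ∈ X_m; junk value 0 if none). -/
noncomputable def hmAddr (k : ℕ) (ω : ℝ) (ν : Fin k → ℝ) (x : CircleK k) : ℕ :=
  if h : ∃ m, m < 2 * k ∧ x ∈ mkk k '' hmX ω ν m then h.choose else 0

/-- The HM itinerary of a point of S_k. -/
noncomputable def hmZeta (k : ℕ) (ω : ℝ) (ν : Fin k → ℝ) (x : CircleK k) : ℕ → ℕ :=
  fun n => hmAddr k ω ν ((RotK k ω)^[n] x)

/-- B_k(ω,ν): the closure of the set of itineraries of good points. -/
noncomputable def hmB (k : ℕ) (ω : ℝ) (ν : Fin k → ℝ) : Set (ℕ → ℕ) :=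
  closure (hmZeta k ω ν '' hmGood k ω ν)

/-- λ_k(ω,ν) = ζ_*(Leb)/k, where Leb is Lebesgue measure on S_k = [0,k). -/
noncomputable def hmLambda (k : ℕ) (ω : ℝ) (ν : Fin k → ℝ) : Measure (ℕ → ℕ) :=
  (k : ℝ≥0∞)⁻¹ •
    ((((volume.restrict (Set.Ico (0 : ℝ) (k : ℝ))).map (mkk k)).restrict
        (hmGood k ω ν)).map (hmZeta k ω ν))

/-- The left cyclic shift τ on ℝ^k. -/
def cyc {k : ℕ} (ν : Fin k → ℝ) : Fin k → ℝ :=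
  fun i => ν ⟨(i.val + 1) % k, Nat.mod_lt _ (Nat.lt_of_le_of_lt (Nat.zero_le _) i.isLt)⟩

/-- The Sturmian minimal set with rotation number ω. -/
noncomputable def sturmianSet (ω : ℝ) : Set (ℕ → ℕ) :=
  if ω = 0 then {fun _ => 0}
  else if ω = 1 then {fun _ => 1}
  else hmB 1 ω fun _ => 1 - ω

/-! ### The class 𝒢 of bimodal degree-one circle maps -/

/-- Piecewise C² on [0,1]. -/
def PiecewiseC2 (f : ℝ → ℝ) : Prop :=
  ∃ (n : ℕ) (x : ℕ → ℝ), x 0 = 0 ∧ x n = 1 ∧ (∀ i, i < n → x i ≤ x (i + 1)) ∧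
    ∀ i, i < n → ContDiffOn ℝ 2 f (Set.Ioo (x i) (x (i + 1)))

/-- g : S¹ → S¹ belongs to the class 𝒢, with lift gt and turning point xmax. -/
structure GMap (g : Circle1 → Circle1) (gt : ℝ → ℝ) (xmax : ℝ) : Prop where
  cont : Continuous gt
  pw : PiecewiseC2 gt
  deg : ∀ x, gt (x + 1) = gt x + 1
  lift : ∀ x, g (mk1 x) = mk1 (gt x)
  xmax_pos : 0 < xmax
  xmax_lt_one : xmax < 1
  expand : ∀ x ∈ Set.Ioo (0 : ℝ) xmax, ∃ d, 1 < d ∧ HasDerivAt gt d x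
  dec : ∀ x ∈ Set.Icc xmax 1, ∀ y ∈ Set.Icc xmax 1, x < y → gt y < gt x
  low : 0 ≤ gt 0
  mid : gt 0 < gt xmax
  high : gt xmax ≤ xmax + 1

/-- The address intervals I_m ⊆ ℝ: I_{2j} = [j, zmax+j], I_{2j+1} = [zmin+j, xmax+j]. -/
def addrI (zmax zmin xmax : ℝ) (m : ℤ) : Set ℝ :=
  if Even m then Set.Icc ((m / 2 : ℤ) : ℝ) (zmax + ((m / 2 : ℤ) : ℝ))
  else Set.Icc (zmin + (((m - 1) / 2 : ℤ) : ℝ)) (xmax + (((m - 1) / 2 : ℤ) : ℝ))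

/-- Λ_∞(g): points of ℝ whose forward gt-orbit stays in the address intervals. -/
def LambdaInf (gt : ℝ → ℝ) (zmax zmin xmax : ℝ) : Set ℝ :=
  {x | ∀ n : ℕ, ∃ m : ℤ, gt^[n] x ∈ addrI zmax zmin xmax m}

/-- Λ_k(g): points of S_k whose forward g_k-orbit stays in I_0 ∪ ⋯ ∪ I_{2k-1}. -/
def LambdaK (k : ℕ) (gk : CircleK k → CircleK k) (zmax zmin xmax : ℝ) : Set (CircleK k) :=
  {x | ∀ n : ℕ, ∃ m : ℕ, m < 2 * k ∧ gk^[n] x ∈ mkk k '' addrI zmax zmin xmax (m : ℤ)}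

/-- Λ₁(g): points of S¹ whose forward g-orbit stays in I₀ ∪ I₁. -/
def Lambda1 (g : Circle1 → Circle1) (zmax zmin xmax : ℝ) : Set Circle1 :=
  {x | ∀ n : ℕ, g^[n] x ∈ mk1 '' Set.Icc 0 zmax ∪ mk1 '' Set.Icc zmin xmax}

/-- A k-fold semi-monotone subset of S_k: it has a lift Z' ⊆ ℝ that is
gt-invariant, invariant under x ↦ x + k, and on which gt is weakly order
preserving. -/
def PhysKfsmK (gt : ℝ → ℝ) (k : ℕ) (Z : Set (CircleK k)) : Prop :=
  ∃ Z' : Set ℝ, (∀ x ∈ Z', gt x ∈ Z') ∧ (fun x => x + (k : ℝ)) '' Z' = Z' ∧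
    (∀ x ∈ Z', ∀ y ∈ Z', x < y → gt x ≤ gt y) ∧ mkk k '' Z' = Z

/-- A k-fold semi-monotone subset of S¹. -/
def PhysKfsm1 (gt : ℝ → ℝ) (k : ℕ) (Z : Set Circle1) : Prop :=
  ∃ Z' : Set ℝ, (∀ x ∈ Z', gt x ∈ Z') ∧ (fun x => x + (k : ℝ)) '' Z' = Z' ∧
    (∀ x ∈ Z', ∀ y ∈ Z', x < y → gt x ≤ gt y) ∧ mk1 '' Z' = Z


/-- The positive-slope region P(h) in ℝ: the complement of the interiors of all
the (translated) flat spots. -/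
def flatComplR {l : ℕ} (a b : Fin l → ℝ) : Set ℝ :=
  {x | ∀ (i : Fin l) (n : ℤ), x ∉ Set.Ioo (a i + n) (b i + n)}

/-- The positive-slope region P(h) in the circle: the complement of the interiors
of the flat spots. -/
def flatComplC {l : ℕ} (a b : Fin l → ℝ) : Set Circle1 :=
  (⋃ i, mk1 '' Set.Ioo (a i) (b i))ᶜ

end
noncomputable section Aux

namespace HMAux

variable {k : ℕ} (ω : ℝ) (ν : Fin k → ℝ)

theorem psum_zero : psum ν 0 = 0 := by simp [psum]

theorem psum_succ {j : ℕ} (hj : j < k) :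
    psum ν (j + 1) = psum ν j + ν ⟨j, hj⟩ := by
  unfold psum
  have key : ∀ i : Fin k, (if (i : ℕ) < j + 1 then ν i else 0)
      = (if (i : ℕ) < j then ν i else 0) + (if i = ⟨j, hj⟩ then ν i else 0) := by
    intro i
    by_cases h2 : i = (⟨j, hj⟩ : Fin k)
    · subst h2
      simp
    · have h3 : (i : ℕ) ≠ j := fun he => h2 (Fin.ext he)
      rw [if_neg h2, add_zero]
      by_cases h1 : (i : ℕ) < j
      · rw [if_pos (by omega), if_pos h1]
      · rw [if_neg (by omega), if_neg h1]
  rw [Finset.sum_congr rfl (fun i _ => key i), Finset.sum_add_distrib,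
    Finset.sum_ite_eq' Finset.univ]
  simp

theorem psum_mono (hν0 : ∀ i, 0 ≤ ν i) {j j' : ℕ} (h : j ≤ j') :
    psum ν j ≤ psum ν j' := by
  unfold psum
  apply Finset.sum_le_sum
  intro i _
  by_cases hi : (i : ℕ) < j
  · rw [if_pos hi, if_pos (by omega)]
  · rw [if_neg hi]
    by_cases hi' : (i : ℕ) < j'
    · rw [if_pos hi']; exact hν0 i
    · rw [if_neg hi']

theorem psum_of_ge {j : ℕ} (hj : k ≤ j) : psum ν j = ∑ i, ν i := by
  unfold psum
  apply Finset.sum_congr rfl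
  intro i _
  rw [if_pos (by omega)]

theorem hmL_even (j : ℕ) : hmL ω ν (2 * j) = psum ν j + j * ω := by
  have h1 : (2 * j) / 2 = j := by omega
  simp [hmL, h1, even_two_mul]

theorem hmL_odd (j : ℕ) : hmL ω ν (2 * j + 1) = psum ν (j + 1) + j * ω := by
  have h1 : (2 * j + 1) / 2 = j := by omega
  have h2 : ¬ Even (2 * j + 1) := by rw [Nat.even_iff]; omega
  simp [hmL, h1, h2]

theorem hmR_eq_hmL_succ (m : ℕ) : hmR ω ν m = hmL ω ν (m + 1) := by
  rcases Nat.even_or_odd m with ⟨j, rfl⟩ | ⟨j, rfl⟩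
  · have hj : j + j = 2 * j := by omega
    rw [hj, hmL_odd]
    have h1 : (2 * j) / 2 = j := by omega
    simp [hmR, h1, even_two_mul]
  · have hj : 2 * j + 1 + 1 = 2 * (j + 1) := by omega
    rw [hj, hmL_even]
    have h1 : (2 * j + 1) / 2 = j := by omega
    have h2 : ¬ Even (2 * j + 1) := by rw [Nat.even_iff]; omega
    simp [hmR, h1, h2]

theorem hmL_zero : hmL ω ν 0 = 0 := by
  have := hmL_even ω ν 0
  simp only [Nat.mul_zero] at this
  rw [this, psum_zero]
  simp

theorem hmL_le_hmR (hω0 : 0 < ω) (hν0 : ∀ i, 0 ≤ ν i) (m : ℕ) :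
    hmL ω ν m ≤ hmR ω ν m := by
  rcases Nat.even_or_odd m with ⟨j, rfl⟩ | ⟨j, rfl⟩
  · have hj : j + j = 2 * j := by omega
    rw [hj]
    have h1 : (2 * j) / 2 = j := by omega
    simp only [hmL, hmR, h1, even_two_mul, if_pos]
    have := psum_mono ν hν0 (Nat.le_succ j)
    simp [even_two_mul, this]
  · have h1 : (2 * j + 1) / 2 = j := by omega
    have h2 : ¬ Even (2 * j + 1) := by rw [Nat.even_iff]; omega
    simp only [hmL, hmR, h1, if_neg h2]
    have : (j : ℝ) * ω ≤ (j + 1 : ℕ) * ω := by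
      apply mul_le_mul_of_nonneg_right _ hω0.le
      push_cast; linarith
    linarith

theorem hmL_mono (hω0 : 0 < ω) (hν0 : ∀ i, 0 ≤ ν i) : Monotone (hmL ω ν) := by
  apply monotone_nat_of_le_succ
  intro m
  rw [← hmR_eq_hmL_succ]
  exact hmL_le_hmR ω ν hω0 hν0 m

theorem hmL_two_k (hνs : ∑ i, ν i = k * (1 - ω)) : hmL ω ν (2 * k) = k := by
  rw [hmL_even, psum_of_ge ν le_rfl, hνs]
  ring

theorem hmL_even_succ (j : ℕ) : hmL ω ν (2 * j + 2) = hmL ω ν (2 * j + 1) + ω := by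
  have hj : 2 * j + 2 = 2 * (j + 1) := by omega
  rw [hj, hmL_even, hmL_odd]
  push_cast; ring

theorem cover_aux {t : ℝ} (ht : 0 ≤ t) :
    ∀ m : ℕ, t ≤ hmL ω ν (m + 1) →
      ∃ m' ≤ m, hmL ω ν m' ≤ t ∧ t ≤ hmL ω ν (m' + 1) := by
  intro m
  induction m with
  | zero => intro h; exact ⟨0, le_rfl, by rw [hmL_zero]; exact ht, h⟩
  | succ n ih =>
    intro h
    by_cases hc : t ≤ hmL ω ν (n + 1)
    · obtain ⟨m', hm', h1, h2⟩ := ih hc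
      exact ⟨m', by omega, h1, h2⟩
    · exact ⟨n + 1, le_rfl, (not_le.mp hc).le, h⟩


theorem mkk_eq_iff {a b : ℝ} :
    mkk k a = mkk k b ↔ ∃ n : ℤ, b = a + n * (k : ℝ) := by
  rw [show mkk k a = ((a : ℝ) : AddCircle ((k:ℕ):ℝ)) from rfl,
    show mkk k b = ((b : ℝ) : AddCircle ((k:ℕ):ℝ)) from rfl,
    QuotientAddGroup.eq_iff_sub_mem]
  constructor
  · intro h
    obtain ⟨n, hn⟩ := AddSubgroup.mem_zmultiples_iff.mp h
    rw [zsmul_eq_mul] at hn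
    exact ⟨-n, by push_cast; linarith⟩
  · rintro ⟨n, rfl⟩
    exact AddSubgroup.mem_zmultiples_iff.mpr ⟨-n, by rw [zsmul_eq_mul]; push_cast; ring⟩

def frakK (k : ℕ) (t : ℝ) : ℝ := t - (k : ℝ) * ⌊t / (k : ℝ)⌋

theorem frakK_mem (hk : 0 < (k : ℝ)) (t : ℝ) : frakK k t ∈ Set.Ico (0 : ℝ) k := by
  have h1 : (⌊t / (k:ℝ)⌋ : ℝ) ≤ t / k := Int.floor_le _
  have h2 : t / (k:ℝ) < ⌊t / (k:ℝ)⌋ + 1 := Int.lt_floor_add_one _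
  have h3 : (k:ℝ) * (t / k) = t := by field_simp
  unfold frakK
  constructor
  · nlinarith
  · nlinarith

theorem frakK_add_int_mul (hk : 0 < (k : ℝ)) (t : ℝ) (n : ℤ) :
    frakK k (t + n * k) = frakK k t := by
  unfold frakK
  have h : (t + n * k) / (k:ℝ) = t / k + n := by field_simp
  rw [h, Int.floor_add_intCast]
  push_cast
  ring

theorem frakK_eq_self (hk : 0 < (k : ℝ)) {t : ℝ} (ht : t ∈ Set.Ico (0:ℝ) k) :
    frakK k t = t := by
  have h0 : ⌊t / (k:ℝ)⌋ = 0 := by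
    rw [Int.floor_eq_zero_iff]
    constructor
    · exact div_nonneg ht.1 hk.le
    · exact (div_lt_one hk).mpr ht.2
  unfold frakK
  rw [h0]
  simp

theorem mkk_frakK (t : ℝ) : mkk k (frakK k t) = mkk k t :=
  mkk_eq_iff.mpr ⟨⌊t / (k:ℝ)⌋, by unfold frakK; ring⟩

theorem frakK_add_eq (hk : 0 < (k : ℝ)) (t c : ℝ) :
    frakK k (t + c) = frakK k (frakK k t + c) := by
  conv_lhs => rw [show t + c = frakK k t + c + ⌊t / (k:ℝ)⌋ * k by unfold frakK; ring]
  rw [frakK_add_int_mul hk]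

theorem frakK_eq_sub (hk : 0 < (k : ℝ)) {v : ℝ} (h1 : (k:ℝ) ≤ v) (h2 : v < 2 * k) :
    frakK k v = v - k := by
  have h1' : frakK k (v - k + (1:ℤ) * (k:ℝ)) = frakK k (v - k) := frakK_add_int_mul hk (v - k) 1
  rw [show (v - (k:ℝ)) + ((1:ℤ):ℝ) * (k:ℝ) = v by push_cast; ring] at h1'
  rw [h1', frakK_eq_self hk ⟨by linarith, by linarith⟩]

noncomputable def addrMin (k : ℕ) (ω : ℝ) (ν : Fin k → ℝ) (x : CircleK k) : ℕ :=
  sInf {m | m < 2 * k ∧ x ∈ mkk k '' hmX ω ν m}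

noncomputable def zetaMin (k : ℕ) (ω : ℝ) (ν : Fin k → ℝ) (x : CircleK k) : ℕ → ℕ :=
  fun n => addrMin k ω ν ((RotK k ω)^[n] x)

theorem addr_spec (hk : 1 ≤ k) (hω0 : 0 < ω) (hν0 : ∀ i, 0 ≤ ν i)
    (hνs : ∑ i, ν i = (k : ℝ) * (1 - ω)) {x : CircleK k} {t : ℝ}
    (ht : t ∈ Set.Ico (0 : ℝ) k) (hxt : x = mkk k t)
    (hbad : ∀ m, m < 2 * k → x ≠ mkk k (hmL ω ν m) ∧ x ≠ mkk k (hmR ω ν m)) :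
    ∃ m, m < 2 * k ∧ t ∈ Set.Ioo (hmL ω ν m) (hmL ω ν (m + 1)) ∧
      ∀ m', m' < 2 * k → x ∈ mkk k '' hmX ω ν m' → m' = m := by
  have hk0 : (0 : ℝ) < k := by exact_mod_cast Nat.lt_of_lt_of_le Nat.zero_lt_one hk
  have h2k : t ≤ hmL ω ν (2 * k - 1 + 1) := by
    rw [show 2 * k - 1 + 1 = 2 * k by omega, hmL_two_k ω ν hνs]
    exact ht.2.le
  obtain ⟨m, hmle, hL, hR⟩ := cover_aux ω ν ht.1 (2 * k - 1) h2k
  have hm2k : m < 2 * k := by omega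
  have hLs : hmL ω ν m < t := by
    rcases lt_or_eq_of_le hL with h | h
    · exact h
    · exact absurd (by rw [hxt, ← h]) (hbad m hm2k).1
  have hRs : t < hmL ω ν (m + 1) := by
    rcases lt_or_eq_of_le hR with h | h
    · exact h
    · exact absurd (by rw [hxt, h, ← hmR_eq_hmL_succ]) (hbad m hm2k).2
  refine ⟨m, hm2k, ⟨hLs, hRs⟩, ?_⟩
  rintro m' hm' ⟨t', ht', hmk⟩
  have ht'Icc : t' ∈ Set.Icc (0 : ℝ) k := by
    refine ⟨?_, ?_⟩
    · calc (0:ℝ) = hmL ω ν 0 := (hmL_zero ω ν).symm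
        _ ≤ hmL ω ν m' := hmL_mono ω ν hω0 hν0 (Nat.zero_le m')
        _ ≤ t' := ht'.1
    · calc t' ≤ hmR ω ν m' := ht'.2
        _ = hmL ω ν (m' + 1) := hmR_eq_hmL_succ ω ν m'
        _ ≤ hmL ω ν (2 * k) := hmL_mono ω ν hω0 hν0 (by omega)
        _ = k := hmL_two_k ω ν hνs
  have htOo : 0 < t ∧ t < k := by
    constructor
    · calc (0:ℝ) = hmL ω ν 0 := (hmL_zero ω ν).symm
        _ ≤ hmL ω ν m := hmL_mono ω ν hω0 hν0 (Nat.zero_le m)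
        _ < t := hLs
    · calc t < hmL ω ν (m + 1) := hRs
        _ ≤ hmL ω ν (2 * k) := hmL_mono ω ν hω0 hν0 (by omega)
        _ = k := hmL_two_k ω ν hνs
  obtain ⟨n, hn⟩ := mkk_eq_iff.mp (hmk.trans hxt)
  have hn0 : n = 0 := by
    have hb1 : -1 < (n : ℝ) := by nlinarith [ht'Icc.1, ht'Icc.2, htOo.1, htOo.2]
    have hb2 : (n : ℝ) < 1 := by nlinarith [ht'Icc.1, ht'Icc.2, htOo.1, htOo.2]
    have : -1 < n ∧ n < 1 := ⟨by exact_mod_cast hb1, by exact_mod_cast hb2⟩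
    omega
  rw [hn0] at hn
  simp at hn
  subst hn
  by_contra hne
  rcases Nat.lt_or_ge m' m with h | h
  · have : hmL ω ν (m' + 1) ≤ hmL ω ν m := hmL_mono ω ν hω0 hν0 (by omega)
    have ht2 : t ≤ hmL ω ν (m' + 1) := by
      rw [← hmR_eq_hmL_succ]; exact ht'.2
    linarith
  · have hgt : m < m' := by omega
    have : hmL ω ν (m + 1) ≤ hmL ω ν m' := hmL_mono ω ν hω0 hν0 (by omega)
    linarith [ht'.1]

theorem addr_eqs (hk : 1 ≤ k) (hω0 : 0 < ω) (hν0 : ∀ i, 0 ≤ ν i)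
    (hνs : ∑ i, ν i = (k : ℝ) * (1 - ω)) {x : CircleK k} {t : ℝ} {m : ℕ}
    (hxt : x = mkk k t) (hm : m < 2 * k)
    (hIoo : t ∈ Set.Ioo (hmL ω ν m) (hmL ω ν (m + 1)))
    (huniq : ∀ m', m' < 2 * k → x ∈ mkk k '' hmX ω ν m' → m' = m) :
    hmAddr k ω ν x = m ∧ addrMin k ω ν x = m := by
  have hmem : x ∈ mkk k '' hmX ω ν m :=
    ⟨t, ⟨hIoo.1.le, by rw [hmR_eq_hmL_succ]; exact hIoo.2.le⟩, hxt.symm⟩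
  have hex : ∃ m', m' < 2 * k ∧ x ∈ mkk k '' hmX ω ν m' := ⟨m, hm, hmem⟩
  constructor
  · rw [hmAddr, dif_pos hex]
    exact huniq _ hex.choose_spec.1 hex.choose_spec.2
  · have hS : {m' | m' < 2 * k ∧ x ∈ mkk k '' hmX ω ν m'} = {m} := by
      ext m'
      constructor
      · intro hm'; exact huniq _ hm'.1 hm'.2
      · intro hm'; rw [Set.mem_singleton_iff] at hm'; subst hm'; exact ⟨hm, hmem⟩
    rw [addrMin, hS, csInf_singleton]

theorem cover_circle (hk : 1 ≤ k) (hω0 : 0 < ω) (hν0 : ∀ i, 0 ≤ ν i)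
    (hνs : ∑ i, ν i = (k : ℝ) * (1 - ω)) (x : CircleK k) :
    ∃ m, m < 2 * k ∧ x ∈ mkk k '' hmX ω ν m := by
  have hk0 : (0 : ℝ) < k := by exact_mod_cast Nat.lt_of_lt_of_le Nat.zero_lt_one hk
  obtain ⟨t0, rfl⟩ := QuotientAddGroup.mk_surjective x
  set t := frakK k t0 with htdef
  have ht : t ∈ Set.Ico (0 : ℝ) k := frakK_mem hk0 t0
  have hxt : (QuotientAddGroup.mk t0 : CircleK k) = mkk k t := (mkk_frakK t0).symm
  have h2k : t ≤ hmL ω ν (2 * k - 1 + 1) := by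
    rw [show 2 * k - 1 + 1 = 2 * k by omega, hmL_two_k ω ν hνs]
    exact ht.2.le
  obtain ⟨m, hmle, hL, hR⟩ := cover_aux ω ν ht.1 (2 * k - 1) h2k
  exact ⟨m, by omega, t, ⟨hL, by rw [hmR_eq_hmL_succ]; exact hR⟩, hxt.symm⟩


theorem shiftSeq_iterate {α : Type*} (s : ℕ → α) (d n : ℕ) :
    shiftSeq^[d] s n = s (n + d) := by
  induction d generalizing s with
  | zero => simp
  | succ d ih =>
    rw [Function.iterate_succ_apply, ih]
    show s (n + d + 1) = s (n + (d + 1))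
    congr 1

theorem mkk_add (a b : ℝ) : mkk k a + mkk k b = mkk k (a + b) := rfl

theorem rot_iterate (ω : ℝ) (t : ℝ) (n : ℕ) :
    (RotK k ω)^[n] (mkk k t) = mkk k (t + n * ω) := by
  induction n with
  | zero => simp
  | succ n ih =>
    rw [Function.iterate_succ_apply', ih]
    show mkk k (t + n * ω) + mkk k ω = mkk k (t + (n + 1 : ℕ) * ω)
    rw [mkk_add]
    congr 1
    push_cast
    ring

theorem good_invariant {ω : ℝ} {ν : Fin k → ℝ} {x : CircleK k}
    (hx : x ∈ hmGood k ω ν) (i : ℕ) : (RotK k ω)^[i] x ∈ hmGood k ω ν := by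
  intro n m hm
  rw [← Function.iterate_add_apply]
  exact hx (n + i) m hm

theorem itinerary_spec (hk : 1 ≤ k) (hω0 : 0 < ω)
    (hν0 : ∀ i, 0 ≤ ν i) (hνs : ∑ i, ν i = (k : ℝ) * (1 - ω))
    {x : CircleK k} (hx : x ∈ hmGood k ω ν) {t : ℝ}
    (ht : t ∈ Set.Ico (0 : ℝ) k) (hxt : x = mkk k t) (n : ℕ) :
    hmZeta k ω ν x n < 2 * k ∧
    frakK k (t + n * ω) ∈
      Set.Ioo (hmL ω ν (hmZeta k ω ν x n)) (hmL ω ν (hmZeta k ω ν x n + 1)) ∧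
    zetaMin k ω ν x n = hmZeta k ω ν x n := by
  have hk0 : (0 : ℝ) < k := by exact_mod_cast Nat.lt_of_lt_of_le Nat.zero_lt_one hk
  set u : ℝ := frakK k (t + n * ω) with hu
  have hu_mem : u ∈ Set.Ico (0 : ℝ) k := frakK_mem hk0 _
  have hy : (RotK k ω)^[n] x = mkk k u := by
    rw [hxt, rot_iterate, ← mkk_frakK]
  have hbad : ∀ m, m < 2 * k → (RotK k ω)^[n] x ≠ mkk k (hmL ω ν m) ∧
      (RotK k ω)^[n] x ≠ mkk k (hmR ω ν m) := fun m hm => hx n m hm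
  obtain ⟨m, hm, hIoo, huniq⟩ := addr_spec ω ν hk hω0 hν0 hνs hu_mem hy hbad
  have he := addr_eqs ω ν hk hω0 hν0 hνs hy hm hIoo huniq
  have hz : hmZeta k ω ν x n = m := he.1
  refine ⟨?_, ?_, ?_⟩
  · rw [hz]; exact hm
  · rw [hz]; exact hIoo
  · show addrMin k ω ν ((RotK k ω)^[n] x) = hmZeta k ω ν x n
    rw [hz, he.2]


theorem block_of_mem (hω0 : 0 < ω) (hν0 : ∀ i, 0 ≤ ν i) {a j : ℕ} {v : ℝ}
    (hv1 : v ∈ Set.Ioo (hmL ω ν a) (hmL ω ν (a + 1)))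
    (hv2 : v ∈ Set.Ioo (hmL ω ν (2 * j)) (hmL ω ν (2 * j + 2))) : a / 2 = j := by
  by_contra hne
  rcases Nat.lt_or_ge a (2 * j) with h | h
  · have hmono : hmL ω ν (a + 1) ≤ hmL ω ν (2 * j) := hmL_mono ω ν hω0 hν0 (by omega)
    linarith [hv1.2, hv2.1]
  · have ha : 2 * j + 2 ≤ a := by omega
    have hmono : hmL ω ν (2 * j + 2) ≤ hmL ω ν a := hmL_mono ω ν hω0 hν0 ha
    linarith [hv1.1, hv2.2]

def wcount (k : ℕ) (s : ℕ → ℕ) (n : ℕ) : ℕ :=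
  ((Finset.range n).filter (fun i => s i = 2 * k - 1)).card

theorem wcount_zero (s : ℕ → ℕ) : wcount k s 0 = 0 := by simp [wcount]

theorem wcount_succ (s : ℕ → ℕ) (n : ℕ) :
    wcount k s (n + 1) = wcount k s n + (if s n = 2 * k - 1 then 1 else 0) := by
  unfold wcount
  rw [Finset.range_add_one, Finset.filter_insert]
  by_cases h : s n = 2 * k - 1
  · rw [if_pos h, if_pos h, Finset.card_insert_of_notMem]
    intro hmem
    exact absurd (Finset.mem_of_mem_filter _ hmem) (by simp)
  · rw [if_neg h, if_neg h, add_zero]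

theorem step_main (hk : 1 ≤ k) (hω0 : 0 < ω) (hω1 : ω < 1)
    (hν0 : ∀ i, 0 ≤ ν i) (hνs : ∑ i, ν i = (k : ℝ) * (1 - ω))
    {x : CircleK k} (hx : x ∈ hmGood k ω ν) {t : ℝ}
    (ht : t ∈ Set.Ico (0 : ℝ) k) (hxt : x = mkk k t) (n : ℕ)
    (hInv : t + n * ω = frakK k (t + n * ω) + (k : ℝ) * wcount k (hmZeta k ω ν x) n) :
    (t + ((n + 1 : ℕ) : ℝ) * ω =
        frakK k (t + ((n + 1 : ℕ) : ℝ) * ω) + (k : ℝ) * wcount k (hmZeta k ω ν x) (n + 1)) ∧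
    hmZeta k ω ν x (n + 1) / 2 + k * wcount k (hmZeta k ω ν x) (n + 1) =
      hmZeta k ω ν x n / 2 + k * wcount k (hmZeta k ω ν x) n + hmZeta k ω ν x n % 2 := by
  have hk0 : (0 : ℝ) < k := by exact_mod_cast Nat.lt_of_lt_of_le Nat.zero_lt_one hk
  obtain ⟨hs_lt, hs_mem, -⟩ := itinerary_spec ω ν hk hω0 hν0 hνs hx ht hxt n
  obtain ⟨hs_lt', hs_mem', -⟩ := itinerary_spec ω ν hk hω0 hν0 hνs hx ht hxt (n + 1)
  set m := hmZeta k ω ν x n with hmdef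
  set m' := hmZeta k ω ν x (n + 1) with hmdef'
  set u := frakK k (t + n * ω) with hu
  have hu_mem : u ∈ Set.Ico (0 : ℝ) k := frakK_mem hk0 _
  have hfr : frakK k (t + ((n + 1 : ℕ) : ℝ) * ω) = frakK k (u + ω) := by
    rw [show t + ((n + 1 : ℕ) : ℝ) * ω = (t + n * ω) + ω by push_cast; ring,
      frakK_add_eq hk0]
  have hkk : (k : ℝ) = psum ν k + k * ω := by
    have h1 := hmL_even ω ν k
    rw [hmL_two_k ω ν hνs] at h1
    exact h1
  rcases Nat.even_or_odd m with hj' | hj'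
  · -- m even
    obtain ⟨j, hj⟩ := hj'
    have hj2 : m = 2 * j := by omega
    have hL2 : hmL ω ν (m + 2) = hmL ω ν (m + 1) + ω := by
      rw [show m + 2 = 2 * j + 2 by omega, show m + 1 = 2 * j + 1 by omega]
      exact hmL_even_succ ω ν j
    have hub : u + ω < (k : ℝ) := by
      have h1 : hmL ω ν (m + 2) ≤ hmL ω ν (2 * k) := hmL_mono ω ν hω0 hν0 (by omega)
      rw [hmL_two_k ω ν hνs] at h1
      linarith [hs_mem.2]
    have hfr2 : frakK k (t + ((n + 1 : ℕ) : ℝ) * ω) = u + ω := by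
      rw [hfr, frakK_eq_self hk0 ⟨by linarith [hu_mem.1], hub⟩]
    have hW : wcount k (hmZeta k ω ν x) (n + 1) = wcount k (hmZeta k ω ν x) n := by
      rw [wcount_succ, if_neg, add_zero]
      rw [← hmdef]
      omega
    have hblock : m' / 2 = j := by
      apply block_of_mem ω ν hω0 hν0 (v := u + ω)
      · rw [← hfr2]; exact hs_mem'
      · constructor
        · have : hmL ω ν (2 * j) = hmL ω ν m := by rw [hj2]
          rw [this]
          linarith [hs_mem.1]
        · rw [show 2 * j + 2 = m + 2 by omega, hL2]
          linarith [hs_mem.2]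
    refine ⟨?_, ?_⟩
    · rw [hfr2, hW]
      push_cast
      push_cast at hInv
      linarith
    · rw [hW]
      omega
  · -- m odd
    obtain ⟨j, hj⟩ := hj'
    by_cases hc : m = 2 * k - 1
    · -- wrap case
      have hkm1 : m = 2 * (k - 1) + 1 := by omega
      have hLtop : (k : ℝ) = hmL ω ν m + ω := by
        have h1 : hmL ω ν (2 * (k - 1) + 2) = hmL ω ν (2 * (k - 1) + 1) + ω :=
          hmL_even_succ ω ν (k - 1)
        rw [show 2 * (k - 1) + 2 = 2 * k by omega] at h1
        rw [hmL_two_k ω ν hνs] at h1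
        rw [hkm1]
        exact h1
      have hlb : (k : ℝ) < u + ω := by
        have := hs_mem.1
        linarith
      have hub2 : u + ω < 2 * (k : ℝ) := by
        have hk1 : (1 : ℝ) ≤ k := by exact_mod_cast hk
        linarith [hu_mem.2]
      have hfr2 : frakK k (t + ((n + 1 : ℕ) : ℝ) * ω) = u + ω - k := by
        rw [hfr, frakK_eq_sub hk0 hlb.le hub2]
      have hW : wcount k (hmZeta k ω ν x) (n + 1) = wcount k (hmZeta k ω ν x) n + 1 := by
        rw [wcount_succ, if_pos]
        rw [← hmdef]
        exact hc
      have hblock : m' / 2 = 0 := by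
        apply block_of_mem ω ν hω0 hν0 (v := u + ω - k)
        · rw [← hfr2]; exact hs_mem'
        · have h0 : hmL ω ν (2 * 0) = 0 := by
            rw [show 2 * 0 = 0 by rfl, hmL_zero]
          have h2 : hmL ω ν (2 * 0 + 2) = hmL ω ν 1 + ω := by
            rw [show 2 * 0 + 2 = 2 * 0 + 2 by rfl]
            exact hmL_even_succ ω ν 0
          have h1 : (0 : ℝ) ≤ hmL ω ν 1 := by
            rw [← hmL_zero ω ν]
            exact hmL_mono ω ν hω0 hν0 (by omega)
          constructor
          · rw [h0]; linarith
          · rw [h2]; linarith [hu_mem.2]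
      refine ⟨?_, ?_⟩
      · rw [hfr2, hW]
        push_cast
        push_cast at hInv
        linarith
      · rw [hW, hblock, hc]
        have hmul : k * (wcount k (hmZeta k ω ν x) n + 1) =
            k * wcount k (hmZeta k ω ν x) n + k := by ring
        omega
    · -- odd, no wrap
      have hjk : j + 2 ≤ k := by omega
      have hL1 : hmL ω ν (m + 1) = psum ν (j + 1) + ((j + 1 : ℕ) : ℝ) * ω := by
        rw [show m + 1 = 2 * (j + 1) by omega]
        exact hmL_even ω ν (j + 1)
      have hub : u + ω < (k : ℝ) := by
        have h1 : psum ν (j + 1) ≤ psum ν k := psum_mono ν hν0 (by omega)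
        have h2 : ((j + 1 : ℕ) : ℝ) * ω + ω ≤ (k : ℝ) * ω := by
          have hcast : ((j + 2 : ℕ) : ℝ) ≤ (k : ℝ) := by exact_mod_cast hjk
          have hmul := mul_le_mul_of_nonneg_right hcast hω0.le
          push_cast at hmul ⊢
          linarith
        have h3 := hs_mem.2
        rw [hL1] at h3
        rw [hkk]
        linarith
      have hfr2 : frakK k (t + ((n + 1 : ℕ) : ℝ) * ω) = u + ω := by
        rw [hfr, frakK_eq_self hk0 ⟨by linarith [hu_mem.1], hub⟩]
      have hW : wcount k (hmZeta k ω ν x) (n + 1) = wcount k (hmZeta k ω ν x) n := by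
        rw [wcount_succ, if_neg, add_zero]
        rw [← hmdef]
        exact hc
      have hblock : m' / 2 = j + 1 := by
        apply block_of_mem ω ν hω0 hν0 (v := u + ω)
        · rw [← hfr2]; exact hs_mem'
        · have hlow : hmL ω ν (2 * (j + 1)) = hmL ω ν m + ω := by
            rw [show 2 * (j + 1) = 2 * j + 2 by omega, show m = 2 * j + 1 by omega]
            exact hmL_even_succ ω ν j
          have hup : hmL ω ν (m + 1) + ω ≤ hmL ω ν (2 * (j + 1) + 2) := by
            have e1 : hmL ω ν (2 * (j + 1) + 2) = hmL ω ν (2 * (j + 1) + 1) + ω :=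
              hmL_even_succ ω ν (j + 1)
            have e2 : hmL ω ν (m + 1) ≤ hmL ω ν (2 * (j + 1) + 1) :=
              hmL_mono ω ν hω0 hν0 (by omega)
            linarith
          constructor
          · rw [hlow]; linarith [hs_mem.1]
          · linarith [hs_mem.2, hup]
      refine ⟨?_, ?_⟩
      · rw [hfr2, hW]
        push_cast
        push_cast at hInv
        linarith
      · rw [hW, hblock]
        omega

theorem inv2_all (hk : 1 ≤ k) (hω0 : 0 < ω) (hω1 : ω < 1)
    (hν0 : ∀ i, 0 ≤ ν i) (hνs : ∑ i, ν i = (k : ℝ) * (1 - ω))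
    {x : CircleK k} (hx : x ∈ hmGood k ω ν) {t : ℝ}
    (ht : t ∈ Set.Ico (0 : ℝ) k) (hxt : x = mkk k t) (n : ℕ) :
    t + n * ω = frakK k (t + n * ω) + (k : ℝ) * wcount k (hmZeta k ω ν x) n := by
  have hk0 : (0 : ℝ) < k := by exact_mod_cast Nat.lt_of_lt_of_le Nat.zero_lt_one hk
  induction n with
  | zero =>
    simp only [Nat.cast_zero, zero_mul, add_zero, wcount_zero, mul_zero]
    exact (frakK_eq_self hk0 ht).symm
  | succ n ih => exact (step_main ω ν hk hω0 hω1 hν0 hνs hx ht hxt n ih).1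

theorem jstep_all (hk : 1 ≤ k) (hω0 : 0 < ω) (hω1 : ω < 1)
    (hν0 : ∀ i, 0 ≤ ν i) (hνs : ∑ i, ν i = (k : ℝ) * (1 - ω))
    {x : CircleK k} (hx : x ∈ hmGood k ω ν) {t : ℝ}
    (ht : t ∈ Set.Ico (0 : ℝ) k) (hxt : x = mkk k t) (n : ℕ) :
    hmZeta k ω ν x (n + 1) / 2 + k * wcount k (hmZeta k ω ν x) (n + 1) =
      hmZeta k ω ν x n / 2 + k * wcount k (hmZeta k ω ν x) n + hmZeta k ω ν x n % 2 :=
  (step_main ω ν hk hω0 hω1 hν0 hνs hx ht hxt n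
    (inv2_all ω ν hk hω0 hω1 hν0 hνs hx ht hxt n)).2

theorem jsum_all (hk : 1 ≤ k) (hω0 : 0 < ω) (hω1 : ω < 1)
    (hν0 : ∀ i, 0 ≤ ν i) (hνs : ∑ i, ν i = (k : ℝ) * (1 - ω))
    {x : CircleK k} (hx : x ∈ hmGood k ω ν) {t : ℝ}
    (ht : t ∈ Set.Ico (0 : ℝ) k) (hxt : x = mkk k t) (n : ℕ) :
    hmZeta k ω ν x n / 2 + k * wcount k (hmZeta k ω ν x) n =
      hmZeta k ω ν x 0 / 2 + ∑ i ∈ Finset.range n, hmZeta k ω ν x i % 2 := by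
  induction n with
  | zero => simp [wcount_zero]
  | succ n ih =>
    rw [Finset.sum_range_succ, jstep_all ω ν hk hω0 hω1 hν0 hνs hx ht hxt n]
    omega


theorem sum_range_add' (b : ℕ → ℕ) (m d : ℕ) :
    ∑ i ∈ Finset.range (m + d), b i =
      ∑ i ∈ Finset.range m, b i + ∑ i ∈ Finset.range d, b (m + i) := by
  have h2 : ∑ i ∈ Finset.Ico m (m + d), b i
      = ∑ i ∈ Finset.range (m + d - m), b (m + i) := by
    rw [Finset.sum_Ico_eq_sum_range]
  have h3 : m + d - m = d := by omega
  calc ∑ i ∈ Finset.range (m + d), b i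
      = ∑ i ∈ Finset.Ico 0 (m + d), b i := by rw [Finset.range_eq_Ico]
    _ = ∑ i ∈ Finset.Ico 0 m, b i + ∑ i ∈ Finset.Ico m (m + d), b i :=
        (Finset.sum_Ico_consecutive _ (Nat.zero_le m) (by omega)).symm
    _ = ∑ i ∈ Finset.range m, b i + ∑ i ∈ Finset.range d, b (m + i) := by
        rw [← Finset.range_eq_Ico, h2, h3]

theorem sum_window {b : ℕ → ℕ} {d : ℕ} (hper : ∀ i, b (i + d) = b i) (m : ℕ) :
    ∑ i ∈ Finset.range d, b (m + i) = ∑ i ∈ Finset.range d, b i := by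
  induction m with
  | zero => simp
  | succ m ih =>
    have h1 : ∑ i ∈ Finset.range (d + 1), b (m + i)
        = ∑ i ∈ Finset.range d, b (m + i) + b (m + d) :=
      Finset.sum_range_succ _ d
    have h2 : ∑ i ∈ Finset.range (d + 1), b (m + i)
        = ∑ i ∈ Finset.range d, b (m + (i + 1)) + b (m + 0) :=
      Finset.sum_range_succ' _ d
    have h3 : ∑ i ∈ Finset.range d, b (m + (i + 1))
        = ∑ i ∈ Finset.range d, b (m + 1 + i) :=
      Finset.sum_congr rfl fun i _ => by rw [show m + (i + 1) = m + 1 + i by omega]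
    have h4 : b (m + d) = b m := hper m
    have h5 : ∑ i ∈ Finset.range d, b (m + i) + b (m + d)
        = ∑ i ∈ Finset.range d, b (m + 1 + i) + b (m + 0) := by
      rw [← h1, h2, h3]
    rw [h4] at h5
    simp only [Nat.add_zero] at h5
    have h6 : ∑ i ∈ Finset.range d, b (m + 1 + i) = ∑ i ∈ Finset.range d, b (m + i) := by
      omega
    rw [h6, ih]

theorem sum_mul_period {b : ℕ → ℕ} {d : ℕ} (hper : ∀ i, b (i + d) = b i) (e : ℕ) :
    ∑ i ∈ Finset.range (e * d), b i = e * ∑ i ∈ Finset.range d, b i := by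
  induction e with
  | zero => simp
  | succ e ih =>
    rw [show (e + 1) * d = e * d + d by ring, sum_range_add', ih, sum_window hper]
    ring

theorem sum_decomp {b : ℕ → ℕ} {N : ℕ} (hN : 0 < N) (hper : ∀ i, b (i + N) = b i) :
    ∀ n, ∑ i ∈ Finset.range n, b i =
      (n / N) * ∑ i ∈ Finset.range N, b i + ∑ i ∈ Finset.range (n % N), b i := by
  intro n
  induction n using Nat.strong_induction_on with
  | _ n ih =>
    by_cases hn : n < N
    · rw [Nat.div_eq_of_lt hn, Nat.mod_eq_of_lt hn]
      omega
    · push_neg at hn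
      have h1 : n - N < n := by omega
      have h2 := ih (n - N) h1
      have h3 : n = (n - N) + N := by omega
      have h4 : ∑ i ∈ Finset.range n, b i
          = ∑ i ∈ Finset.range (n - N), b i + ∑ i ∈ Finset.range N, b i := by
        conv_lhs => rw [h3]
        rw [sum_range_add', sum_window hper]
      rw [h4, h2, Nat.div_eq_sub_div hN hn, Nat.mod_eq_sub_mod hn]
      ring

theorem cesaro {b : ℕ → ℕ} {N K : ℕ} (hN : 0 < N) (hper : ∀ i, b (i + N) = b i)
    (hK : ∑ i ∈ Finset.range N, b i = K) :
    Tendsto (fun n : ℕ => (∑ i ∈ Finset.range (n + 1), (b i : ℝ)) / (n + 1)) atTop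
      (𝓝 ((K : ℝ) / N)) := by
  have hN0 : (0 : ℝ) < N := by exact_mod_cast hN
  have hbound : ∀ n : ℕ, |(∑ i ∈ Finset.range n, (b i : ℝ)) - n * ((K : ℝ) / N)| ≤ K := by
    intro n
    have hdec := sum_decomp hN hper n
    rw [hK] at hdec
    have hcast : (∑ i ∈ Finset.range n, (b i : ℝ))
        = ((n / N : ℕ) : ℝ) * K + ((∑ i ∈ Finset.range (n % N), b i : ℕ) : ℝ) := by
      rw [show (∑ i ∈ Finset.range n, (b i : ℝ)) = ((∑ i ∈ Finset.range n, b i : ℕ) : ℝ) by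
        push_cast; rfl, hdec]
      push_cast
      ring
    have hnd : (n : ℝ) = ((n / N : ℕ) : ℝ) * N + ((n % N : ℕ) : ℝ) := by
      have hnd0 : N * (n / N) + n % N = n := Nat.div_add_mod n N
      rw [Nat.mul_comm] at hnd0
      exact_mod_cast hnd0.symm
    have hr1 : ((∑ i ∈ Finset.range (n % N), b i : ℕ) : ℝ) ≤ K := by
      have hsub : ∑ i ∈ Finset.range (n % N), b i ≤ ∑ i ∈ Finset.range N, b i :=
        Finset.sum_le_sum_of_subset
          (Finset.range_subset_range.mpr (Nat.mod_lt n hN).le)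
      rw [hK] at hsub
      exact_mod_cast hsub
    have hr0 : (0 : ℝ) ≤ ((∑ i ∈ Finset.range (n % N), b i : ℕ) : ℝ) := by positivity
    have hm1 : ((n % N : ℕ) : ℝ) * ((K : ℝ) / N) ≤ K := by
      have hmN : ((n % N : ℕ) : ℝ) ≤ N := by
        exact_mod_cast (Nat.mod_lt n hN).le
      calc ((n % N : ℕ) : ℝ) * ((K : ℝ) / N) ≤ (N : ℝ) * ((K : ℝ) / N) :=
            mul_le_mul_of_nonneg_right hmN (by positivity)
        _ = K := by field_simp
    have hm0 : (0 : ℝ) ≤ ((n % N : ℕ) : ℝ) * ((K : ℝ) / N) := by positivity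
    rw [hcast, hnd]
    have hexp : ((((n / N : ℕ) : ℝ) * N + ((n % N : ℕ) : ℝ)) * ((K : ℝ) / N))
        = ((n / N : ℕ) : ℝ) * K + ((n % N : ℕ) : ℝ) * ((K : ℝ) / N) := by
      field_simp
    rw [hexp, abs_le]
    constructor <;> linarith
  rw [← tendsto_sub_nhds_zero_iff]
  apply squeeze_zero_norm (a := fun n : ℕ => (K : ℝ) * (1 / (n + 1)))
  · intro n
    have hn1 : (0 : ℝ) < (n : ℝ) + 1 := by positivity
    have heq : (∑ i ∈ Finset.range (n + 1), (b i : ℝ)) / ((n : ℕ) + 1) - (K : ℝ) / N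
        = ((∑ i ∈ Finset.range (n + 1), (b i : ℝ)) - ((n : ℕ) + 1 : ℝ) * ((K : ℝ) / N))
          / ((n : ℝ) + 1) := by
      rw [sub_div, mul_div_cancel_left₀ _ (ne_of_gt hn1)]
    rw [Real.norm_eq_abs, heq, abs_div, abs_of_pos hn1]
    rw [div_le_iff₀ hn1]
    have hb := hbound (n + 1)
    have : ((n + 1 : ℕ) : ℝ) = (n : ℝ) + 1 := by push_cast; rfl
    rw [this] at hb
    calc |(∑ i ∈ Finset.range (n + 1), (b i : ℝ)) - ((n : ℝ) + 1) * ((K : ℝ) / N)| ≤ K := hb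
      _ = (K : ℝ) * (1 / ((n : ℝ) + 1)) * ((n : ℝ) + 1) := by field_simp
  · simpa using tendsto_one_div_add_atTop_nhds_zero_nat.const_mul (K : ℝ)

section Rational

variable {p q : ℕ}

theorem exists_lift (hk0 : 0 < (k : ℝ)) (x : CircleK k) :
    ∃ t, t ∈ Set.Ico (0 : ℝ) k ∧ x = mkk k t := by
  obtain ⟨t0, rfl⟩ := QuotientAddGroup.mk_surjective x
  exact ⟨frakK k t0, frakK_mem hk0 t0, (mkk_frakK t0).symm⟩

theorem nat_key (hp : 0 < p) : (k / Nat.gcd p k) * p = (p / Nat.gcd p k) * k := by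
  obtain ⟨pg, hpg⟩ := (Nat.gcd_dvd_left p k)
  obtain ⟨kg, hkg⟩ := (Nat.gcd_dvd_right p k)
  have hg0 : 0 < Nat.gcd p k := Nat.gcd_pos_of_pos_left k hp
  rw [Nat.div_eq_of_eq_mul_right hg0 hkg, Nat.div_eq_of_eq_mul_right hg0 hpg]
  calc kg * p = kg * (Nat.gcd p k * pg) := by rw [← hpg]
    _ = pg * (Nat.gcd p k * kg) := by ring
    _ = pg * k := by rw [← hkg]

theorem Nomega_eq (hp : 0 < p) (hq : 0 < q) :
    ((q * (k / Nat.gcd p k) : ℕ) : ℝ) * ((p : ℝ) / q)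
      = (((p / Nat.gcd p k) * k : ℕ) : ℝ) := by
  have hkey := nat_key (k := k) (p := p) hp
  have hq0 : (q : ℝ) ≠ 0 := by positivity
  have hcast : ((k / Nat.gcd p k : ℕ) : ℝ) * p = ((p / Nat.gcd p k : ℕ) : ℝ) * k := by
    exact_mod_cast hkey
  push_cast
  field_simp
  nlinarith [hcast]


theorem rotN_id (hk : 1 ≤ k) (hp : 0 < p) (hq : 0 < q) (x : CircleK k) :
    (RotK k ((p : ℝ) / q))^[q * (k / Nat.gcd p k)] x = x := by
  have hk0 : (0 : ℝ) < k := by exact_mod_cast Nat.lt_of_lt_of_le Nat.zero_lt_one hk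
  obtain ⟨t, ht, rfl⟩ := exists_lift hk0 x
  rw [rot_iterate]
  rw [mkk_eq_iff]
  have hN := Nomega_eq (k := k) hp hq
  set pg := p / Nat.gcd p k with hpgdef
  refine ⟨-(pg : ℤ), ?_⟩
  have hc1 : (((-(pg : ℤ)) : ℤ) : ℝ) = -((pg : ℕ) : ℝ) := by push_cast; ring
  have hc2 : ((pg * k : ℕ) : ℝ) = ((pg : ℕ) : ℝ) * k := by push_cast; ring
  rw [hc1]
  rw [hc2] at hN
  linarith

theorem zeta_periodic (hk : 1 ≤ k) (hp : 0 < p) (hq : 0 < q) (x : CircleK k) (n : ℕ) :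
    hmZeta k ((p : ℝ) / q) ν x (n + q * (k / Nat.gcd p k))
      = hmZeta k ((p : ℝ) / q) ν x n := by
  show hmAddr k _ ν ((RotK k _)^[n + q * (k / Nat.gcd p k)] x) = _
  rw [Function.iterate_add_apply, rotN_id hk hp hq]
  rfl

theorem zeta_sum_bits (hk : 1 ≤ k) (hp : 0 < p) (hpq : p < q)
    (hν0 : ∀ i, 0 ≤ ν i) (hνs : ∑ i, ν i = (k : ℝ) * (1 - (p : ℝ) / q))
    {x : CircleK k} (hx : x ∈ hmGood k ((p : ℝ) / q) ν) :
    ∑ i ∈ Finset.range (q * (k / Nat.gcd p k)), hmZeta k ((p : ℝ) / q) ν x i % 2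
      = (p / Nat.gcd p k) * k := by
  have hq0 : 0 < q := by omega
  have hω0 : 0 < (p : ℝ) / q := by positivity
  have hω1 : (p : ℝ) / q < 1 := by
    rw [div_lt_one (by positivity)]
    exact_mod_cast hpq
  have hk0 : (0 : ℝ) < k := by exact_mod_cast Nat.lt_of_lt_of_le Nat.zero_lt_one hk
  obtain ⟨t, ht, hxt⟩ := exists_lift hk0 x
  set ω := (p : ℝ) / q with hωdef
  set N := q * (k / Nat.gcd p k) with hNdef
  have hsN : hmZeta k ω ν x N = hmZeta k ω ν x 0 := by
    have := zeta_periodic ν hk hp hq0 x 0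
    simpa using this
  have hj := jsum_all ω ν hk hω0 hω1 hν0 hνs hx ht hxt N
  have hinv := inv2_all ω ν hk hω0 hω1 hν0 hνs hx ht hxt N
  set pg := p / Nat.gcd p k with hpgdef
  have hNω : (N : ℝ) * ω = ((pg * k : ℕ) : ℝ) := Nomega_eq hp hq0
  have hc2 : ((pg * k : ℕ) : ℝ) = ((pg : ℕ) : ℝ) * k := by push_cast; ring
  have huN : frakK k (t + N * ω) = t := by
    have hc1 : (((pg : ℤ)) : ℝ) = ((pg : ℕ) : ℝ) := by push_cast; ring
    have harg : t + (N : ℝ) * ω = t + ((pg : ℕ) : ℤ) * (k : ℝ) := by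
      rw [hc2] at hNω
      rw [hc1]
      linarith
    rw [harg, frakK_add_int_mul hk0, frakK_eq_self hk0 ht]
  rw [huN] at hinv
  have hWk : (k : ℝ) * (wcount k (hmZeta k ω ν x) N : ℕ) = ((pg * k : ℕ) : ℝ) := by
    rw [← hNω]
    linarith
  have hW : k * wcount k (hmZeta k ω ν x) N = pg * k := by
    exact_mod_cast hWk
  rw [hsN] at hj
  omega

theorem zeta_minPeriod (hk : 1 ≤ k) (hp : 0 < p) (hpq : p < q) (hcop : Nat.Coprime p q)
    (hν0 : ∀ i, 0 ≤ ν i) (hνs : ∑ i, ν i = (k : ℝ) * (1 - (p : ℝ) / q))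
    {x : CircleK k} (hx : x ∈ hmGood k ((p : ℝ) / q) ν) :
    Function.minimalPeriod shiftSeq (hmZeta k ((p : ℝ) / q) ν x)
      = q * (k / Nat.gcd p k) := by
  have hq0 : 0 < q := by omega
  have hω0 : 0 < (p : ℝ) / q := by positivity
  have hω1 : (p : ℝ) / q < 1 := by
    rw [div_lt_one (by positivity)]
    exact_mod_cast hpq
  have hk0 : (0 : ℝ) < k := by exact_mod_cast Nat.lt_of_lt_of_le Nat.zero_lt_one hk
  set ω := (p : ℝ) / q with hωdef
  set s := hmZeta k ω ν x with hsdef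
  set N := q * (k / Nat.gcd p k) with hNdef
  have hg0 : 0 < Nat.gcd p k := Nat.gcd_pos_of_pos_left k hp
  have hkg0 : 0 < k / Nat.gcd p k :=
    Nat.div_pos (Nat.le_of_dvd (by omega) (Nat.gcd_dvd_right p k)) hg0
  have hN0 : 0 < N := Nat.mul_pos hq0 hkg0
  have hperN : Function.IsPeriodicPt shiftSeq N s := by
    show shiftSeq^[N] s = s
    funext n
    rw [shiftSeq_iterate]
    exact zeta_periodic ν hk hp hq0 x n
  set d := Function.minimalPeriod shiftSeq s with hddef
  have hdN : d ∣ N := hperN.minimalPeriod_dvd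
  have hd0 : 0 < d := Function.IsPeriodicPt.minimalPeriod_pos hN0 hperN
  have hperd : ∀ i, s (i + d) = s i := by
    intro i
    have hmp : shiftSeq^[d] s = s := Function.isPeriodicPt_minimalPeriod shiftSeq s
    calc s (i + d) = shiftSeq^[d] s i := (shiftSeq_iterate s d i).symm
      _ = s i := by rw [hmp]
  have hperb : ∀ i, s (i + d) % 2 = s i % 2 := fun i => by rw [hperd i]
  obtain ⟨t, ht, hxt⟩ := exists_lift hk0 x
  have hj := jsum_all ω ν hk hω0 hω1 hν0 hνs hx ht hxt d
  have hsd : s d = s 0 := by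
    have := hperd 0
    simpa using this
  rw [← hsdef] at hj
  rw [hsd] at hj
  have hSd : ∑ i ∈ Finset.range d, s i % 2 = k * wcount k s d := by omega
  have hNd : (N / d) * d = N := Nat.div_mul_cancel hdN
  have hSN : ∑ i ∈ Finset.range N, s i % 2 = (N / d) * (k * wcount k s d) := by
    calc ∑ i ∈ Finset.range N, s i % 2
        = ∑ i ∈ Finset.range ((N / d) * d), s i % 2 := by rw [hNd]
      _ = (N / d) * ∑ i ∈ Finset.range d, s i % 2 :=
          sum_mul_period (b := fun i => s i % 2) hperb (N / d)
      _ = (N / d) * (k * wcount k s d) := by rw [hSd]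
  have hB : ∑ i ∈ Finset.range N, s i % 2 = (p / Nat.gcd p k) * k :=
    zeta_sum_bits ν hk hp hpq hν0 hνs hx
  have he1 : (N / d) * (k * wcount k s d) = (p / Nat.gcd p k) * k := by
    rw [← hSN]
    exact hB
  have he3 : k * (N * wcount k s d) = k * ((p / Nat.gcd p k) * d) := by
    calc k * (N * wcount k s d) = ((N / d) * d) * (k * wcount k s d) := by rw [hNd]; ring
      _ = ((N / d) * (k * wcount k s d)) * d := by ring
      _ = ((p / Nat.gcd p k) * k) * d := by rw [he1]
      _ = k * ((p / Nat.gcd p k) * d) := by ring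
  have he4 : N * wcount k s d = (p / Nat.gcd p k) * d :=
    Nat.eq_of_mul_eq_mul_left (by omega) he3
  have hpgp : (p / Nat.gcd p k) ∣ p := Nat.div_dvd_of_dvd (Nat.gcd_dvd_left p k)
  have hcop2 : Nat.Coprime q (p / Nat.gcd p k) :=
    (Nat.Coprime.coprime_dvd_left hpgp hcop).symm
  have hqd : q ∣ d := by
    have hq1 : q ∣ (p / Nat.gcd p k) * d := by
      rw [← he4, hNdef]
      exact ⟨(k / Nat.gcd p k) * wcount k s d, by ring⟩
    rw [Nat.mul_comm] at hq1
    exact Nat.Coprime.dvd_of_dvd_mul_right hcop2 hq1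
  obtain ⟨e, hde⟩ := hqd
  have he0 : 0 < e := by
    rcases Nat.eq_zero_or_pos e with h | h
    · rw [h, Nat.mul_zero] at hde
      omega
    · exact h
  have he5 : q * ((k / Nat.gcd p k) * wcount k s d) = q * ((p / Nat.gcd p k) * e) := by
    calc q * ((k / Nat.gcd p k) * wcount k s d) = N * wcount k s d := by rw [hNdef]; ring
      _ = (p / Nat.gcd p k) * d := he4
      _ = (p / Nat.gcd p k) * (q * e) := by rw [hde]
      _ = q * ((p / Nat.gcd p k) * e) := by ring
  have he6 : (k / Nat.gcd p k) * wcount k s d = (p / Nat.gcd p k) * e :=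
    Nat.eq_of_mul_eq_mul_left hq0 he5
  have hcop3 : Nat.Coprime (k / Nat.gcd p k) (p / Nat.gcd p k) :=
    (Nat.coprime_div_gcd_div_gcd hg0).symm
  have hkge : (k / Nat.gcd p k) ∣ e := by
    have hdvd : (k / Nat.gcd p k) ∣ (p / Nat.gcd p k) * e := by
      rw [← he6]
      exact dvd_mul_right _ _
    rw [Nat.mul_comm] at hdvd
    exact Nat.Coprime.dvd_of_dvd_mul_right hcop3 hdvd
  have hle1 : N ≤ d := by
    have hlee : (k / Nat.gcd p k) ≤ e := Nat.le_of_dvd he0 hkge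
    calc N = q * (k / Nat.gcd p k) := hNdef
      _ ≤ q * e := Nat.mul_le_mul_left q hlee
      _ = d := hde.symm
  have hle2 : d ≤ N := Nat.le_of_dvd hN0 hdN
  omega

theorem zeta_symbRot (hk : 1 ≤ k) (hp : 0 < p) (hpq : p < q)
    (hν0 : ∀ i, 0 ≤ ν i) (hνs : ∑ i, ν i = (k : ℝ) * (1 - (p : ℝ) / q))
    {x : CircleK k} (hx : x ∈ hmGood k ((p : ℝ) / q) ν) :
    symbRot (hmZeta k ((p : ℝ) / q) ν x) ((p : ℝ) / q) := by
  have hq0 : 0 < q := by omega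
  have hg0 : 0 < Nat.gcd p k := Nat.gcd_pos_of_pos_left k hp
  have hkg0 : 0 < k / Nat.gcd p k :=
    Nat.div_pos (Nat.le_of_dvd (by omega) (Nat.gcd_dvd_right p k)) hg0
  have hN0 : 0 < q * (k / Nat.gcd p k) := Nat.mul_pos hq0 hkg0
  have hperb : ∀ i, hmZeta k ((p : ℝ) / q) ν x (i + q * (k / Nat.gcd p k)) % 2
      = hmZeta k ((p : ℝ) / q) ν x i % 2 := fun i => by
    rw [zeta_periodic ν hk hp hq0 x i]
  have hsum := zeta_sum_bits ν hk hp hpq hν0 hνs hx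
  have hc := cesaro hN0 hperb hsum
  have hlim : ((((p / Nat.gcd p k) * k : ℕ) : ℝ) / ((q * (k / Nat.gcd p k) : ℕ) : ℝ))
      = (p : ℝ) / q := by
    have hNω := Nomega_eq (k := k) hp hq0
    have hN0' : ((q * (k / Nat.gcd p k) : ℕ) : ℝ) ≠ 0 := by
      exact_mod_cast Nat.pos_iff_ne_zero.mp hN0
    rw [← hNω, mul_comm, mul_div_assoc, div_self hN0', mul_one]
  exact hlim ▸ hc

end Rational

theorem shift_zeta (x : CircleK k) :
    shiftSeq (hmZeta k ω ν x) = hmZeta k ω ν (RotK k ω x) := by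
  funext n
  show hmAddr k ω ν ((RotK k ω)^[n + 1] x) = hmAddr k ω ν ((RotK k ω)^[n] (RotK k ω x))
  rw [Function.iterate_succ_apply]

theorem rot_mem_good {ω : ℝ} {ν : Fin k → ℝ} {x : CircleK k} (hx : x ∈ hmGood k ω ν) :
    RotK k ω x ∈ hmGood k ω ν := by
  have := good_invariant hx 1
  simpa using this

theorem hmAddr_lt (hk : 1 ≤ k) (x : CircleK k) : hmAddr k ω ν x < 2 * k := by
  rw [hmAddr]
  split
  · next h => exact h.choose_spec.1
  · omega

theorem iterate_periodic_apply {X : Type*} {f : X → X} {z : X} {N : ℕ}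
    (hz : f^[N] z = z) : ∀ m, f^[N * m] z = z := by
  intro m
  induction m with
  | zero => simp
  | succ m ih =>
    rw [show N * (m + 1) = N * m + N by ring, Function.iterate_add_apply, hz, ih]

theorem iterate_mod_apply {X : Type*} {f : X → X} {z : X} {N : ℕ} (hN : 0 < N)
    (hz : f^[N] z = z) (n : ℕ) : f^[n] z = f^[n % N] z := by
  conv_lhs => rw [← Nat.mod_add_div n N]
  rw [Function.iterate_add_apply, iterate_periodic_apply hz]

theorem periodic_bounded_finite (N B : ℕ) (hN : 0 < N) :
    {s : ℕ → ℕ | (∀ n, s (n + N) = s n) ∧ ∀ n, s n < B}.Finite := by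
  classical
  set F : (Fin N → Fin B) → (ℕ → ℕ) := fun f n => (f ⟨n % N, Nat.mod_lt _ hN⟩ : ℕ) with hF
  apply Set.Finite.subset (Set.finite_range F)
  rintro s ⟨hper, hB⟩
  have hper' : ∀ a m, s (a + N * m) = s a := by
    intro a m
    induction m with
    | zero => simp
    | succ m ih => rw [show a + N * (m + 1) = (a + N * m) + N by ring, hper, ih]
  refine ⟨fun i => ⟨s i, hB i⟩, ?_⟩
  funext n
  show s (n % N) = s n
  conv_rhs => rw [← Nat.mod_add_div n N]
  rw [hper']

theorem fwdOrbit_eq_of_mem {X : Type*} {f : X → X} {z y : X} {N : ℕ} (hN : 0 < N)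
    (hz : f^[N] z = z) (hy : y ∈ fwdOrbit f z) : fwdOrbit f y = fwdOrbit f z := by
  obtain ⟨a, rfl⟩ := hy
  ext w
  constructor
  · rintro ⟨m, rfl⟩
    exact ⟨m + a, Function.iterate_add_apply f m a z⟩
  · rintro ⟨i, rfl⟩
    refine ⟨i + N * a - a, ?_⟩
    have ha : a ≤ N * a := Nat.le_mul_of_pos_left a hN
    show f^[i + N * a - a] (f^[a] z) = f^[i] z
    calc f^[i + N * a - a] (f^[a] z) = f^[(i + N * a - a) + a] z :=
          (Function.iterate_add_apply f _ a z).symm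
      _ = f^[i + N * a] z := by congr 1; omega
      _ = f^[i] (f^[N * a] z) := Function.iterate_add_apply f i (N * a) z
      _ = f^[i] z := by rw [iterate_periodic_apply hz]

theorem fwdOrbit_disjoint_or_eq {X : Type*} {f : X → X} {z1 z2 : X} {N : ℕ} (hN : 0 < N)
    (h1 : f^[N] z1 = z1) (h2 : f^[N] z2 = z2) :
    fwdOrbit f z1 = fwdOrbit f z2 ∨ Disjoint (fwdOrbit f z1) (fwdOrbit f z2) := by
  by_cases hint : (fwdOrbit f z1 ∩ fwdOrbit f z2).Nonempty
  · left
    obtain ⟨y, hy1, hy2⟩ := hint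
    rw [← fwdOrbit_eq_of_mem hN h1 hy1, fwdOrbit_eq_of_mem hN h2 hy2]
  · right
    rw [Set.disjoint_iff_inter_eq_empty]
    exact Set.not_nonempty_iff_eq_empty.mp hint

theorem fwdOrbit_eq_image {X : Type*} {f : X → X} {z : X} {N : ℕ} (hN : 0 < N)
    (hz : f^[N] z = z) :
    fwdOrbit f z = (fun i => f^[i] z) '' {i | i < N} := by
  ext w
  constructor
  · rintro ⟨n, rfl⟩
    exact ⟨n % N, Nat.mod_lt _ hN, (iterate_mod_apply hN hz n).symm⟩
  · rintro ⟨i, _, rfl⟩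
    exact ⟨i, rfl⟩

theorem mono_periodic_const (a : ℕ → ℝ≥0∞) (hmono : ∀ i, a i ≤ a (i + 1)) {N : ℕ}
    (hN : 0 < N) (hper : ∀ i, a (i + N) = a i) : ∀ i, a i = a 0 := by
  have hm : ∀ i j, i ≤ j → a i ≤ a j := by
    intro i j h
    induction j, h using Nat.le_induction with
    | base => exact le_refl _
    | succ j hj ih => exact le_trans ih (hmono j)
  have hNm : ∀ m, a (N * m) = a 0 := by
    intro m
    induction m with
    | zero => simp
    | succ m ih => rw [show N * (m + 1) = N * m + N by ring, hper, ih]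
  intro i
  apply le_antisymm
  · calc a i ≤ a (N * i) := hm _ _ (Nat.le_mul_of_pos_left i hN)
      _ = a 0 := hNm i
  · exact hm 0 i (Nat.zero_le i)


theorem mkk_continuous : Continuous (mkk k) := continuous_quotient_mk'

theorem mu_singleton_zero (hk0 : (0 : ℝ) < k) (y : CircleK k) :
    ((volume.restrict (Set.Ico (0 : ℝ) k)).map (mkk k)) {y} = 0 := by
  have hmeas : Measurable (mkk k) := mkk_continuous.measurable
  have hsing : MeasurableSet ({y} : Set (CircleK k)) :=
    (isClosed_singleton).measurableSet
  rw [Measure.map_apply hmeas hsing]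
  obtain ⟨t0, ht0, rfl⟩ := exists_lift hk0 y
  have hsub : (mkk k) ⁻¹' {mkk k t0} ⊆ Set.range (fun n : ℤ => t0 + n * k) := by
    intro t ht
    simp only [Set.mem_preimage, Set.mem_singleton_iff] at ht
    obtain ⟨n, hn⟩ := mkk_eq_iff.mp ht
    exact ⟨-n, by push_cast; linarith⟩
  have hcount : ((mkk k) ⁻¹' {mkk k t0}).Countable := (Set.countable_range _).mono hsub
  have h0 : volume ((mkk k) ⁻¹' {mkk k t0}) = 0 := hcount.measure_zero _
  refine le_antisymm ?_ zero_le
  calc (volume.restrict (Set.Ico (0 : ℝ) k)) ((mkk k) ⁻¹' {mkk k t0})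
      ≤ volume ((mkk k) ⁻¹' {mkk k t0}) := Measure.restrict_le_self _
    _ = 0 := h0

theorem addrMin_measurable (hk : 1 ≤ k) (hω0 : 0 < ω) (hν0 : ∀ i, 0 ≤ ν i)
    (hνs : ∑ i, ν i = (k : ℝ) * (1 - ω)) : Measurable (addrMin k ω ν) := by
  classical
  have hU : ∀ m, MeasurableSet (mkk k '' hmX ω ν m) := fun m =>
    ((isCompact_Icc.image mkk_continuous).isClosed).measurableSet
  have hVmeas : ∀ m, MeasurableSet {x : CircleK k | m < 2 * k ∧ x ∈ mkk k '' hmX ω ν m} := by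
    intro m
    by_cases h : m < 2 * k
    · have : {x : CircleK k | m < 2 * k ∧ x ∈ mkk k '' hmX ω ν m}
          = mkk k '' hmX ω ν m := by
        ext x
        simp [h]
      rw [this]
      exact hU m
    · have : {x : CircleK k | m < 2 * k ∧ x ∈ mkk k '' hmX ω ν m} = ∅ := by
        ext x
        simp [h]
      rw [this]
      exact MeasurableSet.empty
  apply measurable_to_countable'
  intro m
  have hchar : (addrMin k ω ν) ⁻¹' {m}
      = {x : CircleK k | m < 2 * k ∧ x ∈ mkk k '' hmX ω ν m} ∩
        ⋂ j ∈ Finset.range m, {x : CircleK k | j < 2 * k ∧ x ∈ mkk k '' hmX ω ν j}ᶜ := by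
    ext x
    have hne : {m' | m' < 2 * k ∧ x ∈ mkk k '' hmX ω ν m'}.Nonempty := by
      obtain ⟨m', h1, h2⟩ := cover_circle ω ν hk hω0 hν0 hνs x
      exact ⟨m', h1, h2⟩
    have hdef : addrMin k ω ν x = sInf {m' | m' < 2 * k ∧ x ∈ mkk k '' hmX ω ν m'} := rfl
    constructor
    · intro hx
      simp only [Set.mem_preimage, Set.mem_singleton_iff] at hx
      have hmem := Nat.sInf_mem hne
      rw [← hdef, hx] at hmem
      refine ⟨hmem, ?_⟩
      simp only [Set.mem_inter_iff, Set.mem_iInter, Set.mem_compl_iff]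
      intro j hj
      intro hjmem
      have hle := Nat.sInf_le (show j ∈ {m' | m' < 2 * k ∧ x ∈ mkk k '' hmX ω ν m'}
        from ⟨hjmem.1, hjmem.2⟩)
      rw [← hdef, hx] at hle
      rw [Finset.mem_range] at hj
      omega
    · rintro ⟨hm, hrest⟩
      simp only [Set.mem_preimage, Set.mem_singleton_iff]
      rw [hdef]
      apply le_antisymm
      · exact Nat.sInf_le hm
      · by_contra hlt
        push_neg at hlt
        have hmem := Nat.sInf_mem hne
        simp only [Set.mem_iInter, Set.mem_compl_iff] at hrest
        exact hrest (sInf {m' | m' < 2 * k ∧ x ∈ mkk k '' hmX ω ν m'})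
          (Finset.mem_range.mpr hlt) ⟨hmem.1, hmem.2⟩
  rw [hchar]
  refine (hVmeas m).inter ?_
  exact MeasurableSet.biInter (Finset.countable_toSet _) fun j _ => (hVmeas j).compl

theorem rotK_measurable (ω : ℝ) : Measurable (RotK k ω) := by
  have : RotK k ω = fun x => x + mkk k ω := rfl
  rw [this]
  exact measurable_add_const _

theorem zetaMin_measurable (hk : 1 ≤ k) (hω0 : 0 < ω) (hν0 : ∀ i, 0 ≤ ν i)
    (hνs : ∑ i, ν i = (k : ℝ) * (1 - ω)) : Measurable (zetaMin k ω ν) := by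
  apply measurable_pi_lambda
  intro n
  exact (addrMin_measurable ω ν hk hω0 hν0 hνs).comp ((rotK_measurable ω).iterate n)

section Rational2

variable {p q : ℕ}

theorem good_compl_finite (hk : 1 ≤ k) (hp : 0 < p) (hq : 0 < q) :
    ((hmGood k ((p : ℝ) / q) ν)ᶜ).Finite := by
  classical
  set ω := (p : ℝ) / q with hω
  set N := q * (k / Nat.gcd p k) with hN
  have hg0 : 0 < Nat.gcd p k := Nat.gcd_pos_of_pos_left k hp
  have hkg0 : 0 < k / Nat.gcd p k :=
    Nat.div_pos (Nat.le_of_dvd (by omega) (Nat.gcd_dvd_right p k)) hg0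
  have hN0 : 0 < N := Nat.mul_pos hq hkg0
  set F : ℕ × ℕ × Bool → CircleK k := fun z =>
    (if z.2.2 then mkk k (hmL ω ν z.2.1) else mkk k (hmR ω ν z.2.1)) - mkk k (z.1 * ω)
    with hF
  apply Set.Finite.subset (Set.Finite.image F
    ((Set.finite_Iio N).prod ((Set.finite_Iio (2 * k)).prod Set.finite_univ)))
  intro x hx
  simp only [hmGood, Set.mem_compl_iff, Set.mem_setOf_eq] at hx
  push_neg at hx
  obtain ⟨n, m, hm, hcase⟩ := hx
  have hRN : (RotK k ω)^[N] x = x := rotN_id hk hp hq x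
  have hmod := iterate_mod_apply hN0 hRN n
  have hRj : ∀ j : ℕ, (RotK k ω)^[j] x = x + mkk k (j * ω) := by
    intro j
    induction j with
    | zero =>
      simp only [Function.iterate_zero_apply, Nat.cast_zero, zero_mul]
      have h0 : mkk k (0 : ℝ) = 0 := rfl
      rw [h0, add_zero]
    | succ j ih =>
      rw [Function.iterate_succ_apply', ih]
      show x + mkk k (j * ω) + mkk k ω = x + mkk k ((j + 1 : ℕ) * ω)
      rw [add_assoc, mkk_add]
      congr 2
      push_cast
      ring
  have hkey : ∀ (c : CircleK k), (RotK k ω)^[n] x = c →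
      x = c - mkk k ((n % N : ℕ) * ω) := by
    intro c hc
    rw [hmod, hRj (n % N)] at hc
    rw [← hc]
    abel
  by_cases hA : (RotK k ω)^[n] x = mkk k (hmL ω ν m)
  · exact ⟨(n % N, m, true), ⟨Nat.mod_lt _ hN0, hm, trivial⟩, (hkey _ hA).symm⟩
  · exact ⟨(n % N, m, false), ⟨Nat.mod_lt _ hN0, hm, trivial⟩, (hkey _ (hcase hA)).symm⟩

theorem zetaG_finite (hk : 1 ≤ k) (hp : 0 < p) (hq : 0 < q) :
    (hmZeta k ((p : ℝ) / q) ν '' hmGood k ((p : ℝ) / q) ν).Finite := by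
  have hg0 : 0 < Nat.gcd p k := Nat.gcd_pos_of_pos_left k hp
  have hkg0 : 0 < k / Nat.gcd p k :=
    Nat.div_pos (Nat.le_of_dvd (by omega) (Nat.gcd_dvd_right p k)) hg0
  have hN0 : 0 < q * (k / Nat.gcd p k) := Nat.mul_pos hq hkg0
  apply Set.Finite.subset (periodic_bounded_finite (q * (k / Nat.gcd p k)) (2 * k) hN0)
  rintro s ⟨x, hx, rfl⟩
  exact ⟨fun n => zeta_periodic ν hk hp hq x n, fun n => hmAddr_lt ((p : ℝ) / q) ν hk _⟩

theorem hmB_eq (hk : 1 ≤ k) (hp : 0 < p) (hq : 0 < q) :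
    hmB k ((p : ℝ) / q) ν = hmZeta k ((p : ℝ) / q) ν '' hmGood k ((p : ℝ) / q) ν :=
  (zetaG_finite ν hk hp hq).isClosed.closure_eq

end Rational2
end HMAux
end Aux

/-- For rational p/q in lowest terms, B_k(p/q,ν) is a finite
union of periodic orbits of minimal period qk/gcd(p,k), every element has
symbolic rotation number p/q, and λ_k(p/q,ν) is a convex combination of the
invariant measures on these orbits. -/
theorem statement12 (k : ℕ) (hk : 1 ≤ k) (p q : ℕ) (hp : 0 < p) (hpq : p < q)
    (hcop : Nat.Coprime p q)
    (ν : Fin k → ℝ) (hν : HMAllowable ((p : ℝ) / q) ν) :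
    (∃ r : ℕ, 0 < r ∧ ∃ s : Fin r → (ℕ → ℕ),
      Pairwise (Function.onFun Disjoint fun j => fwdOrbit shiftSeq (s j)) ∧
      hmB k ((p : ℝ) / q) ν = ⋃ j, fwdOrbit shiftSeq (s j) ∧
      (∀ j, Function.minimalPeriod shiftSeq (s j) = q * k / Nat.gcd p k) ∧
      ∃ c : Fin r → ℝ≥0∞, ∑ j, c j = 1 ∧
        hmLambda k ((p : ℝ) / q) ν =
          ∑ j, c j • orbitMeasure (s j) (q * k / Nat.gcd p k)) ∧
    ∀ s ∈ hmB k ((p : ℝ) / q) ν, symbRot s ((p : ℝ) / q) := by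
  classical
  obtain ⟨hω0, hω1, hν0, hνs⟩ := hν
  have hq0 : 0 < q := lt_trans hp hpq
  have hk0 : (0 : ℝ) < k := by exact_mod_cast Nat.lt_of_lt_of_le Nat.zero_lt_one hk
  set ω : ℝ := (p : ℝ) / q with hωdef
  set N : ℕ := q * (k / Nat.gcd p k) with hNdef
  have hNeq : q * k / Nat.gcd p k = N := Nat.mul_div_assoc q (Nat.gcd_dvd_right p k)
  have hg0 : 0 < Nat.gcd p k := Nat.gcd_pos_of_pos_left k hp
  have hkg0 : 0 < k / Nat.gcd p k :=
    Nat.div_pos (Nat.le_of_dvd (by omega) (Nat.gcd_dvd_right p k)) hg0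
  have hN0 : 0 < N := Nat.mul_pos hq0 hkg0
  set G := hmGood k ω ν with hGdef
  set Z := hmZeta k ω ν '' G with hZdef
  have hZfin : Z.Finite := HMAux.zetaG_finite ν hk hp hq0
  have hBZ : hmB k ω ν = Z := HMAux.hmB_eq ν hk hp hq0
  -- nonemptiness of the good set
  have hGne : G.Nonempty := by
    have hcfin := HMAux.good_compl_finite ν hk hp hq0
    by_contra hemp
    rw [Set.not_nonempty_iff_eq_empty] at hemp
    have hcu : (Gᶜ : Set (CircleK k)) = Set.univ := by rw [hemp, Set.compl_empty]
    rw [hcu] at hcfin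
    have h1 : (Set.Ico (0 : ℝ) k).Infinite := Set.Ico_infinite hk0
    have hinj : Set.InjOn (mkk k) (Set.Ico (0 : ℝ) k) := by
      intro a ha b hb hab
      obtain ⟨n, hn⟩ := HMAux.mkk_eq_iff.mp hab
      have hn1 : -1 < (n : ℝ) := by nlinarith [ha.1, ha.2, hb.1, hb.2]
      have hn2 : (n : ℝ) < 1 := by nlinarith [ha.1, ha.2, hb.1, hb.2]
      have hn0 : n = 0 := by
        have : -1 < n ∧ n < 1 := ⟨by exact_mod_cast hn1, by exact_mod_cast hn2⟩
        omega
      rw [hn0] at hn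
      simp at hn
      linarith [hn]
    exact ((h1.image hinj).mono (Set.subset_univ _)) hcfin
  have hZne : Z.Nonempty := hGne.image _
  have hZper : ∀ s ∈ Z, shiftSeq^[N] s = s := by
    rintro s ⟨x, hx, rfl⟩
    funext n
    rw [HMAux.shiftSeq_iterate]
    exact HMAux.zeta_periodic ν hk hp hq0 x n
  have hZmin : ∀ s ∈ Z, Function.minimalPeriod shiftSeq s = N := by
    rintro s ⟨x, hx, rfl⟩
    exact HMAux.zeta_minPeriod ν hk hp hpq hcop hν0 hνs hx
  have hZshift : ∀ s ∈ Z, shiftSeq s ∈ Z := by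
    rintro s ⟨x, hx, rfl⟩
    exact ⟨RotK k ω x, HMAux.rot_mem_good hx, (HMAux.shift_zeta ω ν x).symm⟩
  have hZiter : ∀ s ∈ Z, ∀ i, shiftSeq^[i] s ∈ Z := by
    intro s hs i
    induction i with
    | zero => simpa using hs
    | succ i ih => rw [Function.iterate_succ_apply']; exact hZshift _ ih
  have hZorb : ∀ s ∈ Z, fwdOrbit shiftSeq s ⊆ Z := by
    rintro s hs w ⟨i, rfl⟩
    exact hZiter s hs i
  -- orbit bookkeeping
  set T : Finset (ℕ → ℕ) := hZfin.toFinset with hTdef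
  have hTZ : ∀ {s : ℕ → ℕ}, s ∈ T ↔ s ∈ Z := fun {s} => hZfin.mem_toFinset
  set OS : Finset (Set (ℕ → ℕ)) := T.image (fwdOrbit shiftSeq) with hOS
  have hOSne : OS.Nonempty := by
    obtain ⟨s, hs⟩ := hZne
    exact ⟨fwdOrbit shiftSeq s, Finset.mem_image_of_mem _ (hTZ.mpr hs)⟩
  set r := OS.card with hr
  have hr0 : 0 < r := Finset.card_pos.mpr hOSne
  set eO := OS.equivFin with heO
  have hrep : ∀ o : {x // x ∈ OS}, ∃ z, z ∈ Z ∧ fwdOrbit shiftSeq z = (o : Set (ℕ → ℕ)) := by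
    intro o
    obtain ⟨z, hz, hzo⟩ := Finset.mem_image.mp o.2
    exact ⟨z, hTZ.mp hz, hzo⟩
  choose rep hrepZ hrepO using hrep
  set sfun : Fin r → (ℕ → ℕ) := fun j => rep (eO.symm j) with hsfun
  have hsZ : ∀ j, sfun j ∈ Z := fun j => hrepZ _
  have horb : ∀ j, fwdOrbit shiftSeq (sfun j) = ((eO.symm j : {x // x ∈ OS}) : Set (ℕ → ℕ)) :=
    fun j => hrepO _
  -- pairwise disjointness of orbits
  have hpair : Pairwise (Function.onFun Disjoint fun j => fwdOrbit shiftSeq (sfun j)) := by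
    intro j j' hjj'
    have hne : fwdOrbit shiftSeq (sfun j) ≠ fwdOrbit shiftSeq (sfun j') := by
      rw [horb j, horb j']
      intro h
      exact hjj' (eO.symm.injective (Subtype.ext h))
    rcases HMAux.fwdOrbit_disjoint_or_eq hN0 (hZper _ (hsZ j)) (hZper _ (hsZ j')) with h | h
    · exact absurd h hne
    · exact h
  -- union of orbits
  have hunion : Z = ⋃ j, fwdOrbit shiftSeq (sfun j) := by
    ext s
    constructor
    · intro hs
      have hoin : fwdOrbit shiftSeq s ∈ OS := Finset.mem_image_of_mem _ (hTZ.mpr hs)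
      refine Set.mem_iUnion.mpr ⟨eO ⟨_, hoin⟩, ?_⟩
      rw [hsfun]
      simp only []
      rw [horb (eO ⟨_, hoin⟩), Equiv.symm_apply_apply]
      exact ⟨0, rfl⟩
    · intro hs
      obtain ⟨j, hj⟩ := Set.mem_iUnion.mp hs
      exact hZorb _ (hsZ j) hj
  -- measure setup
  haveI : Fact ((0 : ℝ) < (k : ℝ)) := ⟨hk0⟩
  have hmkkmeas : Measurable (mkk k) := HMAux.mkk_continuous.measurable
  set μ : Measure (CircleK k) := ((volume.restrict (Set.Ico (0 : ℝ) (k : ℝ))).map (mkk k))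
    with hμdef
  have hμvol : μ = volume := by
    rw [hμdef]
    have h1 : (volume : Measure ℝ).restrict (Set.Ico (0 : ℝ) k)
        = volume.restrict (Set.Ioc (0 : ℝ) k) := Measure.restrict_congr_set Ico_ae_eq_Ioc
    rw [h1]
    have h2 := (AddCircle.measurePreserving_mk (k : ℝ) 0).map_eq
    rw [zero_add] at h2
    exact h2
  have hGcfin : (Gᶜ).Finite := HMAux.good_compl_finite ν hk hp hq0
  haveI : NullSingletonClass μ := ⟨fun y => by rw [hμdef]; exact HMAux.mu_singleton_zero hk0 y⟩
  have hGc0 : μ Gᶜ = 0 := hGcfin.countable.measure_zero μ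
  have hGmeas : MeasurableSet G := by
    have := hGcfin.isClosed.measurableSet.compl
    rwa [compl_compl] at this
  have hzmeas : Measurable (HMAux.zetaMin k ω ν) := HMAux.zetaMin_measurable ω ν hk hω0 hν0 hνs
  have hzeq : ∀ x ∈ G, HMAux.zetaMin k ω ν x = hmZeta k ω ν x := by
    intro x hx
    obtain ⟨t, ht, hxt⟩ := HMAux.exists_lift hk0 x
    funext n
    exact (HMAux.itinerary_spec ω ν hk hω0 hν0 hνs hx ht hxt n).2.2
  set C : (ℕ → ℕ) → Set (CircleK k) := fun s => G ∩ (HMAux.zetaMin k ω ν) ⁻¹' {s} with hCdef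
  have hCmeas : ∀ s, MeasurableSet (C s) :=
    fun s => hGmeas.inter (hzmeas (measurableSet_singleton s))
  have hCdisj : ∀ s s', s ≠ s' → Disjoint (C s) (C s') := by
    intro s s' hss
    rw [Set.disjoint_left]
    rintro x ⟨hxG, hxs⟩ ⟨_, hxs'⟩
    simp only [Set.mem_preimage, Set.mem_singleton_iff] at hxs hxs'
    exact hss (by rw [← hxs, ← hxs'])
  have hCsub : ∀ x ∈ G, x ∈ C (hmZeta k ω ν x) := by
    intro x hx
    refine ⟨hx, ?_⟩
    simp only [Set.mem_preimage, Set.mem_singleton_iff]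
    exact hzeq x hx
  have hres : μ.restrict G = μ := by
    apply Measure.restrict_eq_self_of_ae_mem
    rw [ae_iff]
    have : {x | ¬ x ∈ G} = Gᶜ := rfl
    rw [this]
    exact hGc0
  have hmap1 : hmLambda k ω ν = (k : ℝ≥0∞)⁻¹ • (μ.map (HMAux.zetaMin k ω ν)) := by
    have hdefeq : hmLambda k ω ν
        = (k : ℝ≥0∞)⁻¹ • ((μ.restrict G).map (hmZeta k ω ν)) := rfl
    rw [hdefeq]
    congr 1
    have hae : hmZeta k ω ν =ᶠ[ae (μ.restrict G)] HMAux.zetaMin k ω ν := by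
      rw [Filter.EventuallyEq, ae_restrict_iff' hGmeas]
      exact Filter.Eventually.of_forall fun x hx => (hzeq x hx).symm
    rw [Measure.map_congr hae, hres]
  have hTmem : ∀ x ∈ G, hmZeta k ω ν x ∈ T := fun x hx => hTZ.mpr ⟨x, hx, rfl⟩
  -- atomic decomposition of the pushforward
  have hdec : μ.map (HMAux.zetaMin k ω ν) = ∑ s ∈ T, μ (C s) • Measure.dirac s := by
    ext E hE
    rw [Measure.map_apply hzmeas hE]
    have h2 := measure_inter_add_diff (μ := μ) ((HMAux.zetaMin k ω ν) ⁻¹' E) hGmeas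
    have h3 : μ ((HMAux.zetaMin k ω ν) ⁻¹' E \ G) = 0 :=
      le_antisymm (le_trans (measure_mono fun x hx => hx.2) hGc0.le) zero_le
    rw [h3, add_zero] at h2
    rw [← h2]
    have h4 : (HMAux.zetaMin k ω ν) ⁻¹' E ∩ G
        = ⋃ s ∈ T.filter (fun s => s ∈ E), C s := by
      ext x
      simp only [Set.mem_inter_iff, Set.mem_preimage, Set.mem_iUnion, Finset.mem_filter,
        exists_prop]
      constructor
      · rintro ⟨hxE, hxG⟩
        refine ⟨hmZeta k ω ν x, ⟨hTmem x hxG, ?_⟩, hCsub x hxG⟩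
        rw [← hzeq x hxG]
        exact hxE
      · rintro ⟨s, ⟨hsT, hsE⟩, hxG, hxs⟩
        simp only [Set.mem_preimage, Set.mem_singleton_iff] at hxs
        exact ⟨by rw [hxs]; exact hsE, hxG⟩
    rw [h4, measure_biUnion_finset ?_ (fun s _ => hCmeas s)]
    · have h5 : (∑ s ∈ T, μ (C s) • Measure.dirac s) E
          = ∑ s ∈ T, μ (C s) * Measure.dirac s E := by
        rw [Measure.coe_finset_sum, Finset.sum_apply]
        apply Finset.sum_congr rfl
        intro s _
        rw [Measure.smul_apply, smul_eq_mul]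
      rw [h5]
      rw [Finset.sum_congr rfl (fun s (_ : s ∈ T) => by
        rw [Measure.dirac_apply' s hE] : ∀ s ∈ T, μ (C s) * Measure.dirac s E
          = μ (C s) * E.indicator 1 s)]
      rw [Finset.sum_filter]
      apply Finset.sum_congr rfl
      intro s _
      by_cases hsE : s ∈ E
      · rw [if_pos hsE, Set.indicator_of_mem hsE]
        simp
      · rw [if_neg hsE, Set.indicator_of_notMem hsE]
        simp
    · intro s hs s' hs' hss
      exact hCdisj s s' hss
  -- invariance of weights along orbits
  have hRpre : ∀ A : Set (CircleK k), μ ((RotK k ω) ⁻¹' A) = μ A := by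
    intro A
    rw [hμvol]
    have hfun : RotK k ω = fun y => mkk k ω + y := funext fun y => add_comm _ _
    rw [hfun]
    exact measure_preimage_add _ _ _
  have hwstep : ∀ s ∈ Z, μ (C s) ≤ μ (C (shiftSeq s)) := by
    intro s hs
    have hsub : C s ⊆ (RotK k ω) ⁻¹' (C (shiftSeq s)) := by
      rintro x ⟨hxG, hxs⟩
      simp only [Set.mem_preimage, Set.mem_singleton_iff] at hxs
      refine ⟨HMAux.rot_mem_good hxG, ?_⟩
      simp only [Set.mem_preimage, Set.mem_singleton_iff]
      rw [hzeq _ (HMAux.rot_mem_good hxG), ← HMAux.shift_zeta, ← hzeq x hxG, hxs]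
    calc μ (C s) ≤ μ ((RotK k ω) ⁻¹' (C (shiftSeq s))) := measure_mono hsub
      _ = μ (C (shiftSeq s)) := hRpre _
  have hworb : ∀ s ∈ Z, ∀ i, μ (C (shiftSeq^[i] s)) = μ (C s) := by
    intro s hs
    apply HMAux.mono_periodic_const (fun i => μ (C (shiftSeq^[i] s))) ?_ hN0 ?_
    · intro i
      show μ (C (shiftSeq^[i] s)) ≤ μ (C (shiftSeq^[i + 1] s))
      have hthis := hwstep _ (hZiter s hs i)
      have h2 : shiftSeq (shiftSeq^[i] s) = shiftSeq^[i + 1] s :=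
        (Function.iterate_succ_apply' shiftSeq i s).symm
      rwa [h2] at hthis
    · intro i
      show μ (C (shiftSeq^[i + N] s)) = μ (C (shiftSeq^[i] s))
      rw [Function.iterate_add_apply, hZper s hs]
  -- orbit finsets
  set OF : (ℕ → ℕ) → Finset (ℕ → ℕ) :=
    fun z => (Finset.range N).image (fun i => shiftSeq^[i] z) with hOF
  have hOFcoe : ∀ z ∈ Z, (OF z : Set (ℕ → ℕ)) = fwdOrbit shiftSeq z := by
    intro z hz
    rw [hOF]
    simp only [Finset.coe_image, Finset.coe_range]
    rw [HMAux.fwdOrbit_eq_image hN0 (hZper z hz)]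
    rfl
  have hOFinj : ∀ z ∈ Z, ∀ a ∈ Finset.range N, ∀ b ∈ Finset.range N,
      shiftSeq^[a] z = shiftSeq^[b] z → a = b := by
    intro z hz a ha b hb hab
    have hinj := Function.iterate_injOn_Iio_minimalPeriod (f := shiftSeq) (x := z)
    rw [hZmin z hz] at hinj
    exact hinj (Set.mem_Iio.mpr (Finset.mem_range.mp ha))
      (Set.mem_Iio.mpr (Finset.mem_range.mp hb)) hab
  have hTbi : T = Finset.univ.biUnion (fun j : Fin r => OF (sfun j)) := by
    apply Finset.coe_injective
    rw [Finset.coe_biUnion]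
    rw [hZfin.coe_toFinset]
    rw [hunion]
    rw [Finset.coe_univ]
    rw [Set.biUnion_univ]
    exact (Set.iUnion_congr fun j => (hOFcoe _ (hsZ j))).symm
  have hOFdisjFin : Set.PairwiseDisjoint (↑(Finset.univ : Finset (Fin r)))
      (fun j => OF (sfun j)) := by
    intro j _ j' _ hjj'
    have hd : Disjoint (↑(OF (sfun j)) : Set (ℕ → ℕ)) (↑(OF (sfun j')) : Set (ℕ → ℕ)) := by
      rw [hOFcoe _ (hsZ j), hOFcoe _ (hsZ j')]
      exact hpair hjj'
    exact Finset.disjoint_coe.mp hd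
  have hNne : (N : ℝ≥0∞) ≠ 0 := by exact_mod_cast Nat.pos_iff_ne_zero.mp hN0
  have hNtop : (N : ℝ≥0∞) ≠ ⊤ := ENNReal.natCast_ne_top N
  have hkne : (k : ℝ≥0∞) ≠ 0 := by
    simp only [ne_eq, Nat.cast_eq_zero]
    omega
  have hktop : (k : ℝ≥0∞) ≠ ⊤ := ENNReal.natCast_ne_top k
  have hsum_orbit : ∀ j, (∑ s' ∈ OF (sfun j), μ (C s') • Measure.dirac s')
      = (μ (C (sfun j)) * N) • orbitMeasure (sfun j) N := by
    intro j
    rw [hOF]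
    rw [Finset.sum_image (hOFinj _ (hsZ j))]
    rw [Finset.sum_congr rfl (fun i (_ : i ∈ Finset.range N) => by
      rw [hworb _ (hsZ j) i] :
      ∀ i ∈ Finset.range N, μ (C (shiftSeq^[i] (sfun j))) • Measure.dirac (shiftSeq^[i] (sfun j))
        = μ (C (sfun j)) • Measure.dirac (shiftSeq^[i] (sfun j)))]
    rw [← Finset.smul_sum]
    rw [orbitMeasure, smul_smul, mul_assoc, ENNReal.mul_inv_cancel hNne hNtop, mul_one]
  have hμuniv : μ Set.univ = (k : ℝ≥0∞) := by
    rw [hμdef, Measure.map_apply hmkkmeas MeasurableSet.univ, Set.preimage_univ,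
      Measure.restrict_apply_univ, Real.volume_Ico]
    rw [sub_zero, ENNReal.ofReal_natCast]
  have hGμ : μ G = (k : ℝ≥0∞) := by
    have h1 : μ Set.univ ≤ μ G + μ Gᶜ := by
      rw [← Set.union_compl_self G]
      exact measure_union_le _ _
    rw [hGc0, add_zero, hμuniv] at h1
    exact le_antisymm (by rw [← hμuniv]; exact measure_mono (Set.subset_univ _)) h1
  have hsumT : ∑ s ∈ T, μ (C s) = (k : ℝ≥0∞) := by
    rw [← measure_biUnion_finset (fun s _ s' _ hss => hCdisj s s' hss)
      (fun s _ => hCmeas s)]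
    have hUG : ⋃ s ∈ T, C s = G := by
      ext x
      simp only [Set.mem_iUnion, exists_prop]
      constructor
      · rintro ⟨s, _, hxG, _⟩
        exact hxG
      · intro hx
        exact ⟨hmZeta k ω ν x, hTmem x hx, hCsub x hx⟩
    rw [hUG, hGμ]
  have hNsum : ∀ j, (∑ s' ∈ OF (sfun j), μ (C s')) = μ (C (sfun j)) * N := by
    intro j
    rw [hOF, Finset.sum_image (hOFinj _ (hsZ j))]
    rw [Finset.sum_congr rfl (fun i (_ : i ∈ Finset.range N) => hworb _ (hsZ j) i)]
    rw [Finset.sum_const, Finset.card_range, nsmul_eq_mul, mul_comm]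
  -- final assembly
  refine ⟨⟨r, hr0, sfun, hpair, ?_, ?_, ?_⟩, ?_⟩
  · rw [hBZ]
    exact hunion
  · intro j
    rw [hNeq]
    exact hZmin _ (hsZ j)
  · refine ⟨fun j => (k : ℝ≥0∞)⁻¹ * (μ (C (sfun j)) * N), ?_, ?_⟩
    · rw [← Finset.mul_sum]
      have h1 : ∑ j, (μ (C (sfun j)) * N) = ∑ s ∈ T, μ (C s) := by
        rw [hTbi, Finset.sum_biUnion hOFdisjFin]
        exact (Finset.sum_congr rfl fun j _ => hNsum j).symm
      rw [h1, hsumT, ENNReal.inv_mul_cancel hkne hktop]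
    · rw [hNeq, hmap1, hdec, hTbi, Finset.sum_biUnion hOFdisjFin]
      rw [Finset.sum_congr rfl fun j (_ : j ∈ Finset.univ) => hsum_orbit j]
      rw [Finset.smul_sum]
      exact Finset.sum_congr rfl fun j _ => smul_smul _ _ _
  · intro s hs
    rw [hBZ] at hs
    obtain ⟨x, hx, rfl⟩ := hs
    exact HMAux.zeta_symbRot ν hk hp hpq hν0 hνs hx
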